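/- arXiv:1909.01883 — 3 statements merged into one kernel-verified Lean document; each statement's English description precedes it below -/
import Mathlib

section
/- Let 0 ≤ λ̄ < 1 and consider the two-dimensional controlled system Δ_f' = −1 + Δ_f·u, Δ_m' = −1 − Δ_m·u with measurable control u(t) ∈ [−1,1], initial conditions Δ_f(0) = Δ_m(0) = λ̄, on [0,T] with Δ_f(T) = 0. Then |Δ_m(T)| ≤ 4 − λ̄² − 4√(1 − λ̄²), and this bound is attained. -/
open Set Filter Topology



/-- Monotonicity from nonnegative derivative off a countable set. -/
lemma mono_of_deriv_nonneg {φ c : ℝ → ℝ} {a b : ℝ} {s : Set ℝ} (hs : s.Countable)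
    (hcont : ContinuousOn φ (Set.Icc a b))
    (hderiv : ∀ t ∈ Set.Ioo a b \ s, HasDerivAt φ (c t) t)
    (hpos : ∀ t ∈ Set.Ioo a b \ s, 0 ≤ c t) (hab : a ≤ b) :
    φ a ≤ φ b := by
  rcases eq_or_lt_of_le hab with rfl | hab
  · exact le_refl _
  obtain ⟨seq, hseq⟩ : ∃ seq : ℕ → ℝ, s ⊆ Set.range seq := by
    obtain ⟨seq, hseq⟩ := (hs.insert 0).exists_eq_range (Set.insert_nonempty _ _)
    exact ⟨seq, by rw [← hseq]; exact Set.subset_insert _ _⟩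
  set w : ℕ → ℝ := fun n => (1/2 : ℝ)^n with hw
  have hwpos : ∀ n, 0 < w n := fun n => by positivity
  have hwsum : Summable w := summable_geometric_of_lt_one (by norm_num) (by norm_num)
  have hwtsum : ∑' n, w n = 2 := tsum_geometric_two
  set J : ℝ → ℝ := fun x => ∑' n, if seq n < x then w n else 0 with hJ
  have hJsummable : ∀ x, Summable (fun n => if seq n < x then w n else 0) := by
    intro x
    apply Summable.of_nonneg_of_le _ _ hwsum
    · intro n; by_cases h : seq n < x
      · rw [if_pos h]; exact (hwpos n).le
      · rw [if_neg h]
    · intro n; by_cases h : seq n < x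
      · rw [if_pos h]
      · rw [if_neg h]; exact (hwpos n).le
  have hJmono : ∀ {x y}, x ≤ y → J x ≤ J y := by
    intro x y hxy
    apply Summable.tsum_le_tsum _ (hJsummable x) (hJsummable y)
    intro n
    by_cases h : seq n < x
    · rw [if_pos h, if_pos (h.trans_le hxy)]
    · rw [if_neg h]
      by_cases h2 : seq n < y
      · rw [if_pos h2]; exact (hwpos n).le
      · rw [if_neg h2]
  have hJnonneg : ∀ x, 0 ≤ J x := by
    intro x
    apply tsum_nonneg
    intro n
    by_cases h : seq n < x
    · rw [if_pos h]; exact (hwpos n).le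
    · rw [if_neg h]
  have hJle : ∀ x, J x ≤ 2 := by
    intro x
    rw [← hwtsum]
    apply Summable.tsum_le_tsum _ (hJsummable x) hwsum
    intro n
    by_cases h : seq n < x
    · rw [if_pos h]
    · rw [if_neg h]; exact (hwpos n).le
  have hJjump : ∀ {n : ℕ} {y}, seq n < y → J (seq n) + w n ≤ J y := by
    intro n y hny
    have h1 : Summable (fun k => if k = n then w k else 0) := by
      apply Summable.of_nonneg_of_le _ _ hwsum
      · intro k; by_cases h : k = n
        · rw [if_pos h]; exact (hwpos k).le
        · rw [if_neg h]
      · intro k; by_cases h : k = n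
        · rw [if_pos h]
        · rw [if_neg h]; exact (hwpos k).le
    have h2 : (∑' k, if k = n then w k else 0) = w n := by
      have he : (fun k => if k = n then w k else 0) = (fun k => if k = n then w n else 0) := by
        funext k
        by_cases h : k = n
        · rw [if_pos h, if_pos h, h]
        · rw [if_neg h, if_neg h]
      rw [he, tsum_ite_eq]
    calc J (seq n) + w n
        = ∑' k, ((if seq k < seq n then w k else 0) + (if k = n then w k else 0)) := by
          rw [Summable.tsum_add (hJsummable _) h1, h2]
      _ ≤ J y := by
          apply Summable.tsum_le_tsum _ ((hJsummable _).add h1) (hJsummable y)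
          intro k
          by_cases hk : k = n
          · subst hk
            rw [if_neg (lt_irrefl _), if_pos rfl, if_pos hny, zero_add]
          · rw [if_neg hk, add_zero]
            by_cases h1' : seq k < seq n
            · rw [if_pos h1', if_pos (h1'.trans hny)]
            · rw [if_neg h1']
              by_cases h2' : seq k < y
              · rw [if_pos h2']; exact (hwpos k).le
              · rw [if_neg h2']
  have key : ∀ x ∈ Ioo a b, ∀ y ∈ Ioo a b, x ≤ y → φ x ≤ φ y := by
    rintro x ⟨hax, hxb⟩ y ⟨hay, hyb⟩ hxy
    have hstep : ∀ ε : ℝ, 0 < ε → φ x - φ y ≤ ε * (y - x) + ε * 2 := by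
      intro ε hε
      set E := {z ∈ Icc x y | φ x - φ z ≤ ε * (z - x) + ε * (J z - J x)} with hE
      have hxE : x ∈ E := ⟨⟨le_refl _, hxy⟩, by simp⟩
      have hEne : E.Nonempty := ⟨x, hxE⟩
      have hEbdd : BddAbove E := (bddAbove_Icc (a := x) (b := y)).mono (Set.sep_subset _ _)
      set c₀ := sSup E with hc₀
      have hc₀x : x ≤ c₀ := le_csSup hEbdd hxE
      have hc₀y : c₀ ≤ y := csSup_le hEne (fun z hz => hz.1.2)
      have hIccsub : Icc x y ⊆ Icc a b := Icc_subset_Icc hax.le hyb.le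
      have hc₀E : c₀ ∈ E := by
        set F := {z ∈ Icc x c₀ | φ x - φ z - ε * (z - x) ≤ ε * (J c₀ - J x)} with hF
        have hFclosed : IsClosed F := by
          have hg : ContinuousOn (fun z => φ x - φ z - ε * (z - x)) (Icc x c₀) := by
            apply ContinuousOn.sub
            · exact continuousOn_const.sub
                (hcont.mono ((Icc_subset_Icc le_rfl hc₀y).trans hIccsub))
            · exact (continuous_const.mul (continuous_id.sub continuous_const)).continuousOn
          exact hg.preimage_isClosed_of_isClosed isClosed_Icc isClosed_Iic
        have hEF : E ⊆ F := by
          rintro z ⟨⟨hz1, hz2⟩, hz3⟩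
          have hzc : z ≤ c₀ := le_csSup hEbdd ⟨⟨hz1, hz2⟩, hz3⟩
          refine ⟨⟨hz1, hzc⟩, ?_⟩
          nlinarith [hJmono hzc]
        have hcc : c₀ ∈ F := (hFclosed.closure_subset_iff.2 hEF) (csSup_mem_closure hEne hEbdd)
        exact ⟨⟨hcc.1.1, hc₀y⟩, by linarith [hcc.2]⟩
      have hc₀eq : c₀ = y := by
        by_contra hne
        have hc₀lty : c₀ < y := lt_of_le_of_ne hc₀y hne
        have hc₀b : c₀ < b := hc₀lty.trans hyb
        have hzex : ∃ z, z ∈ E ∧ c₀ < z := by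
          have hIocmem : Ioc c₀ y ∈ 𝓝[>] c₀ := Ioc_mem_nhdsGT hc₀lty
          by_cases hcs : c₀ ∈ s
          · obtain ⟨n, hn⟩ := hseq hcs
            have hcw : ContinuousWithinAt φ (Icc a b) c₀ :=
              hcont _ (hIccsub ⟨hc₀x, hc₀y⟩)
            have hsub : 𝓝[>] c₀ ≤ 𝓝[Icc a b] c₀ := by
              apply nhdsWithin_le_of_mem
              exact mem_of_superset hIocmem
                (fun z hz => ⟨hax.le.trans (hc₀x.trans hz.1.le), hz.2.trans hyb.le⟩)
            have htd : Tendsto φ (𝓝[>] c₀) (𝓝 (φ c₀)) := hcw.mono_left hsub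
            have hev1 : ∀ᶠ z in 𝓝[>] c₀, |φ z - φ c₀| < ε * w n := by
              have := Metric.tendsto_nhds.mp htd (ε * w n) (by positivity)
              simpa [Real.dist_eq] using this
            have hev2 : ∀ᶠ z in 𝓝[>] c₀, z ∈ Ioc c₀ y :=
              Filter.eventually_of_mem hIocmem (fun z hz => hz)
            obtain ⟨z, hz1, hz2⟩ := (hev1.and hev2).exists
            obtain ⟨hz21, hz22⟩ := hz2
            refine ⟨z, ⟨⟨hc₀x.trans hz21.le, hz22⟩, ?_⟩, hz21⟩
            have hj : J c₀ + w n ≤ J z := by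
              have := hJjump (n := n) (y := z) (by rw [hn]; exact hz21)
              rwa [hn] at this
            have e1 : ε * (c₀ - x) ≤ ε * (z - x) := by nlinarith [hz21.le]
            have e2 : ε * w n ≤ ε * (J z - J c₀) := by nlinarith
            have e3 : φ c₀ - φ z ≤ ε * w n := by
              have := abs_le.1 hz1.le
              linarith [this.1]
            linarith [hc₀E.2]
          · have hc₀Ioo : c₀ ∈ Ioo a b := ⟨hax.trans_le hc₀x, hc₀b⟩
            have hd := hderiv c₀ ⟨hc₀Ioo, hcs⟩
            have hdpos := hpos c₀ ⟨hc₀Ioo, hcs⟩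
            have hslope := hasDerivAt_iff_tendsto_slope.mp hd
            have hev1 : ∀ᶠ z in 𝓝[≠] c₀, slope φ c₀ z > -ε :=
              hslope (Ioi_mem_nhds (by linarith))
            have hev1' : ∀ᶠ z in 𝓝[>] c₀, slope φ c₀ z > -ε :=
              hev1.filter_mono (nhdsWithin_mono c₀ (fun z hz => ne_of_gt hz))
            have hev2 : ∀ᶠ z in 𝓝[>] c₀, z ∈ Ioc c₀ y :=
              Filter.eventually_of_mem hIocmem (fun z hz => hz)
            obtain ⟨z, hz1, hz2⟩ := (hev1'.and hev2).exists
            obtain ⟨hz21, hz22⟩ := hz2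
            refine ⟨z, ⟨⟨hc₀x.trans hz21.le, hz22⟩, ?_⟩, hz21⟩
            have hzc : (0:ℝ) < z - c₀ := by linarith [hz21]
            rw [slope_def_field] at hz1
            have hz1' : -ε * (z - c₀) < φ z - φ c₀ := by
              have := (lt_div_iff₀ hzc).1 (gt_iff_lt.1 hz1)
              linarith
            have e1 : ε * (J c₀ - J x) ≤ ε * (J z - J x) := by nlinarith [hJmono hz21.le]
            have e2 : ε * (c₀ - x) + ε * (z - c₀) = ε * (z - x) := by ring
            linarith [hc₀E.2]
        obtain ⟨z, hzE, hzc⟩ := hzex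
        exact absurd (le_csSup hEbdd hzE) (not_le.2 hzc)
      have hyE : y ∈ E := hc₀eq ▸ hc₀E
      have := hyE.2
      nlinarith [hJle y, hJnonneg x]
    by_contra hcon
    push_neg at hcon
    have hL : (0:ℝ) ≤ y - x := by linarith
    have h3 : (0:ℝ) < y - x + 3 := by linarith
    have hD : (0:ℝ) < φ x - φ y := by linarith
    have := hstep ((φ x - φ y) / (y - x + 3)) (div_pos hD h3)
    rw [div_mul_eq_mul_div, div_mul_eq_mul_div, ← add_div, le_div_iff₀ h3] at this
    nlinarith
  -- endpoints by continuity
  have hay : ∀ y ∈ Ioo a b, φ a ≤ φ y := by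
    rintro y hy
    haveI : (𝓝[Ioo a y] a).NeBot := by
      apply mem_closure_iff_nhdsWithin_neBot.1
      rw [closure_Ioo (ne_of_lt hy.1)]
      exact ⟨le_refl _, hy.1.le⟩
    have h1 : Tendsto φ (𝓝[Ioo a y] a) (𝓝 (φ a)) := by
      apply (hcont a ⟨le_refl _, hab.le⟩).mono_left
      apply nhdsWithin_mono
      exact fun z hz => ⟨hz.1.le, (hz.2.trans hy.2).le⟩
    apply le_of_tendsto h1
    filter_upwards [self_mem_nhdsWithin] with z hz
    exact key z ⟨hz.1, hz.2.trans hy.2⟩ y hy hz.2.le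
  haveI : (𝓝[Ioo a b] b).NeBot := by
    apply mem_closure_iff_nhdsWithin_neBot.1
    rw [closure_Ioo (ne_of_lt hab)]
    exact ⟨hab.le, le_refl _⟩
  have h2 : Tendsto φ (𝓝[Ioo a b] b) (𝓝 (φ b)) := by
    apply (hcont b ⟨hab.le, le_refl _⟩).mono_left
    apply nhdsWithin_mono
    exact fun z hz => ⟨hz.1.le, hz.2.le⟩
  apply ge_of_tendsto h2
  filter_upwards [self_mem_nhdsWithin] with z hz
  exact hay z hz


lemma anti_of_deriv_nonpos {φ c : ℝ → ℝ} {a b : ℝ} {s : Set ℝ} (hs : s.Countable)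
    (hcont : ContinuousOn φ (Set.Icc a b))
    (hderiv : ∀ t ∈ Set.Ioo a b \ s, HasDerivAt φ (c t) t)
    (hneg : ∀ t ∈ Set.Ioo a b \ s, c t ≤ 0) (hab : a ≤ b) :
    φ b ≤ φ a := by
  have := mono_of_deriv_nonneg (φ := fun t => -φ t) (c := fun t => -c t) hs hcont.neg
    (fun t ht => (hderiv t ht).neg) (fun t ht => neg_nonneg.2 (hneg t ht)) hab
  simpa using this

lemma hasDerivAt_relu_sq (x : ℝ) : HasDerivAt (fun y : ℝ => max y 0 ^ 2) (2 * max x 0) x := by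
  rcases lt_trichotomy x 0 with hx | rfl | hx
  · have hev : (fun _ : ℝ => (0:ℝ)) =ᶠ[𝓝 x] (fun y : ℝ => max y 0 ^ 2) := by
      filter_upwards [Iio_mem_nhds hx] with y hy
      rw [max_eq_right (le_of_lt hy)]
      norm_num
    have : HasDerivAt (fun _ : ℝ => (0:ℝ)) 0 x := hasDerivAt_const x 0
    rw [max_eq_right hx.le, mul_zero]
    exact this.congr_of_eventuallyEq hev.symm
  · have h0 : (2:ℝ) * max 0 0 = 0 := by simp
    rw [h0, hasDerivAt_iff_isLittleO]
    have heq : (fun y : ℝ => max y 0 ^ 2 - max (0:ℝ) 0 ^ 2 - (y - 0) • (0:ℝ)) =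
        fun y : ℝ => max y 0 ^ 2 := by
      funext y; simp
    rw [heq]
    apply Asymptotics.isLittleO_iff.2
    intro c hc
    filter_upwards [Metric.ball_mem_nhds (0:ℝ) hc] with y hy
    simp only [Metric.mem_ball, Real.dist_eq, sub_zero] at hy
    have h1 : max y 0 ≤ |y| := max_le (le_abs_self y) (abs_nonneg y)
    have h2 : 0 ≤ max y 0 := le_max_right _ _
    have h3 : max y 0 ^ 2 ≤ c * |y| := by nlinarith [abs_nonneg y]
    rw [Real.norm_eq_abs, Real.norm_eq_abs, sub_zero, abs_of_nonneg (pow_nonneg h2 2)]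
    exact h3
  · have hev : (fun y : ℝ => y ^ 2) =ᶠ[𝓝 x] (fun y : ℝ => max y 0 ^ 2) := by
      filter_upwards [Ioi_mem_nhds hx] with y hy
      rw [max_eq_left (le_of_lt hy)]
    have h2 : HasDerivAt (fun y : ℝ => y ^ 2) (2 * x) x := by
      simpa using hasDerivAt_pow 2 x
    rw [max_eq_left hx.le]
    exact h2.congr_of_eventuallyEq hev.symm



section traj

variable {T lam : ℝ} {Δf Δm u : ℝ → ℝ} {s : Set ℝ}

/-- f stays nonnegative. -/
lemma traj_f_nonneg (hT : 0 ≤ T) (hcf : ContinuousOn Δf (Set.Icc 0 T))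
    (hu : ∀ t ∈ Set.Icc 0 T, u t ∈ Set.Icc (-1:ℝ) 1) (hs : s.Countable)
    (hDf : ∀ t ∈ Set.Ioo 0 T \ s, HasDerivAt Δf (-1 + Δf t * u t) t)
    (hf0 : 0 ≤ Δf 0) (hfT : Δf T = 0) :
    ∀ t ∈ Set.Icc 0 T, 0 ≤ Δf t := by
  by_contra hcon
  push_neg at hcon
  obtain ⟨t₀, ht₀, ht₀neg⟩ := hcon
  have ht₀0 : t₀ ≠ 0 := fun h => by rw [h] at ht₀neg; linarith
  have ht₀T : t₀ ≠ T := fun h => by rw [h, hfT] at ht₀neg; linarith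
  have ht₀mem : t₀ ∈ Set.Ioo 0 T := ⟨lt_of_le_of_ne ht₀.1 (Ne.symm ht₀0), lt_of_le_of_ne ht₀.2 ht₀T⟩
  have hsub : Icc t₀ T ⊆ Icc 0 T := Icc_subset_Icc ht₀.1 le_rfl
  set K := Icc t₀ T ∩ Δf ⁻¹' {0} with hK
  have hKclosed : IsClosed K :=
    (hcf.mono hsub).preimage_isClosed_of_isClosed isClosed_Icc isClosed_singleton
  have hKne : K.Nonempty := ⟨T, ⟨ht₀.2, le_rfl⟩, by simp [hfT]⟩
  have hKbdd : BddBelow K := ⟨t₀, fun z hz => hz.1.1⟩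
  set τ := sInf K with hτ
  have hτK : τ ∈ K := hKclosed.csInf_mem hKne hKbdd
  have hτt₀ : t₀ ≤ τ := le_csInf hKne (fun z hz => hz.1.1)
  have hτT : τ ≤ T := hτK.1.2
  have hτ0 : Δf τ = 0 := hτK.2
  have hneg : ∀ t ∈ Ico t₀ τ, Δf t < 0 := by
    rintro t ⟨htt₀, htτ⟩
    rcases lt_trichotomy (Δf t) 0 with h | h | h
    · exact h
    · exact absurd (csInf_le hKbdd ⟨⟨htt₀, le_trans htτ.le hτT⟩, by simp [h]⟩) (not_le.2 htτ)
    · exfalso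
      have hcont' : ContinuousOn Δf (Icc t₀ t) :=
        hcf.mono (Icc_subset_Icc ht₀.1 (le_trans htτ.le hτT))
      have : (0:ℝ) ∈ Icc (Δf t₀) (Δf t) := ⟨ht₀neg.le, h.le⟩
      obtain ⟨r, hr, hr0⟩ := intermediate_value_Icc htt₀ hcont' this
      have : r ∈ K := ⟨⟨hr.1, le_trans (hr.2.trans htτ.le) hτT⟩, by simp [hr0]⟩
      exact absurd (csInf_le hKbdd this) (not_le.2 (lt_of_le_of_lt hr.2 htτ))
  -- h(t) = (1 + Δf t) * exp t is nonincreasing on [t₀, τ]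
  have hanti := anti_of_deriv_nonpos (φ := fun t => (1 + Δf t) * Real.exp t)
      (c := fun t => Real.exp t * (Δf t * (1 + u t))) (a := t₀) (b := τ) hs
      (by
        apply ContinuousOn.mul
        · exact continuousOn_const.add (hcf.mono (fun z hz => hsub ⟨hz.1, hz.2.trans hτT⟩))
        · exact Real.continuous_exp.continuousOn)
      (by
        rintro t ⟨htIoo, hts⟩
        have htIoo' : t ∈ Set.Ioo 0 T :=
          ⟨lt_of_lt_of_le ht₀mem.1 htIoo.1.le, lt_of_lt_of_le htIoo.2 hτT⟩
        have hD := (hDf t ⟨htIoo', hts⟩)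
        have := ((hasDerivAt_const t (1:ℝ)).add hD).mul (Real.hasDerivAt_exp t)
        exact this.congr_deriv (by simp only [Pi.add_apply, Pi.sub_apply]; ring))
      (by
        rintro t ⟨htIoo, hts⟩
        have hft : Δf t < 0 := hneg t ⟨htIoo.1.le, htIoo.2⟩
        have hut : u t ∈ Set.Icc (-1:ℝ) 1 := hu t
          ⟨le_trans ht₀.1 htIoo.1.le, le_trans htIoo.2.le hτT⟩
        have h4 : Δf t * (1 + u t) ≤ 0 :=
          mul_nonpos_of_nonpos_of_nonneg hft.le (by linarith [hut.1])
        have h5 := mul_nonneg (Real.exp_pos t).le (neg_nonneg.2 h4)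
        show Real.exp t * (Δf t * (1 + u t)) ≤ 0
        linarith)
      hτt₀
  beta_reduce at hanti
  rw [hτ0, add_zero, one_mul] at hanti
  nlinarith [Real.exp_pos t₀, Real.exp_le_exp.2 hτt₀,
    mul_pos (show (0:ℝ) < -Δf t₀ by linarith) (Real.exp_pos t₀)]

/-- f is bounded by lam. -/
lemma traj_f_le (hT : 0 ≤ T) (hcf : ContinuousOn Δf (Set.Icc 0 T))
    (hu : ∀ t ∈ Set.Icc 0 T, u t ∈ Set.Icc (-1:ℝ) 1) (hs : s.Countable)
    (hDf : ∀ t ∈ Set.Ioo 0 T \ s, HasDerivAt Δf (-1 + Δf t * u t) t)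
    (hfnn : ∀ t ∈ Set.Icc 0 T, 0 ≤ Δf t) {lam : ℝ} (hf0 : Δf 0 = lam) (hlam1 : lam ≤ 1) :
    ∀ t ∈ Set.Icc 0 T, Δf t ≤ lam := by
  rintro t₁ ⟨ht₁0, ht₁T⟩
  have hmono := mono_of_deriv_nonneg (φ := fun t => (1 - Δf t) * Real.exp (-t))
      (c := fun t => Real.exp (-t) * (Δf t * (1 - u t))) (a := 0) (b := t₁) hs
      (by
        apply ContinuousOn.mul
        · exact continuousOn_const.sub (hcf.mono (Icc_subset_Icc le_rfl ht₁T))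
        · exact (Real.continuous_exp.comp continuous_neg).continuousOn)
      (by
        rintro t ⟨htIoo, hts⟩
        have htIoo' : t ∈ Set.Ioo 0 T := ⟨htIoo.1, lt_of_lt_of_le htIoo.2 ht₁T⟩
        have hD := (hDf t ⟨htIoo', hts⟩)
        have hexp : HasDerivAt (fun t : ℝ => Real.exp (-t)) (-Real.exp (-t)) t := by
          exact ((Real.hasDerivAt_exp (-t)).comp t (hasDerivAt_neg t)).congr_deriv (by ring)
        have := ((hasDerivAt_const t (1:ℝ)).sub hD).mul hexp
        exact this.congr_deriv (by simp only [Pi.add_apply, Pi.sub_apply]; ring))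
      (by
        rintro t ⟨htIoo, hts⟩
        have htmem : t ∈ Set.Icc 0 T := ⟨htIoo.1.le, le_trans htIoo.2.le ht₁T⟩
        have hft : 0 ≤ Δf t := hfnn t htmem
        have hut := hu t htmem
        show 0 ≤ Real.exp (-t) * (Δf t * (1 - u t))
        have := mul_nonneg hft (by linarith [hut.2] : (0:ℝ) ≤ 1 - u t)
        exact mul_nonneg (Real.exp_pos (-t)).le this)
      ht₁0
  beta_reduce at hmono
  rw [hf0, neg_zero, Real.exp_zero, mul_one] at hmono
  have h1 : (1:ℝ) ≤ Real.exp t₁ := Real.one_le_exp ht₁0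
  have h2 : Real.exp (-t₁) * Real.exp t₁ = 1 := by
    rw [← Real.exp_add]; simp
  have h3 : 0 < Real.exp (-t₁) := Real.exp_pos _
  nlinarith [mul_le_mul_of_nonneg_right hmono (Real.exp_pos t₁).le]

/-- m stays below any level c ∈ [0,1] it has reached. -/
lemma traj_m_le (hT : 0 ≤ T) (hcm : ContinuousOn Δm (Set.Icc 0 T))
    (hu : ∀ t ∈ Set.Icc 0 T, u t ∈ Set.Icc (-1:ℝ) 1) (hs : s.Countable)
    (hDm : ∀ t ∈ Set.Ioo 0 T \ s, HasDerivAt Δm (-1 - Δm t * u t) t)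
    {cc t₀ : ℝ} (hcc0 : 0 ≤ cc) (hcc1 : cc ≤ 1) (ht₀ : t₀ ∈ Set.Icc 0 T)
    (hm0 : Δm t₀ ≤ cc) :
    ∀ t ∈ Set.Icc t₀ T, Δm t ≤ cc := by
  rintro t₁ ⟨ht₁0, ht₁T⟩
  have hsub : Icc t₀ t₁ ⊆ Icc 0 T := Icc_subset_Icc ht₀.1 ht₁T
  have hanti := anti_of_deriv_nonpos
      (φ := fun t => max (Δm t - cc) 0 ^ 2 * Real.exp (-(2*t)))
      (c := fun t => (2 * max (Δm t - cc) 0 * (-1 - Δm t * u t)) * Real.exp (-(2*t)) +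
        max (Δm t - cc) 0 ^ 2 * (-2 * Real.exp (-(2*t)))) (a := t₀) (b := t₁) hs
      (by
        apply ContinuousOn.mul
        · apply ContinuousOn.pow
          exact ((hcm.mono hsub).sub continuousOn_const).sup continuousOn_const
        · exact (Real.continuous_exp.comp (continuous_const.mul continuous_id).neg).continuousOn)
      (by
        rintro t ⟨htIoo, hts⟩
        have htIoo' : t ∈ Set.Ioo 0 T :=
          ⟨lt_of_le_of_lt ht₀.1 htIoo.1, lt_of_lt_of_le htIoo.2 ht₁T⟩
        have hD := hDm t ⟨htIoo', hts⟩
        have houter : HasDerivAt (fun t => max (Δm t - cc) 0 ^ 2)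
            (2 * max (Δm t - cc) 0 * (-1 - Δm t * u t)) t := by
          have := (hasDerivAt_relu_sq (Δm t - cc)).comp t (hD.sub_const cc)
          exact this
        have hexp : HasDerivAt (fun t : ℝ => Real.exp (-(2*t))) (-2 * Real.exp (-(2*t))) t := by
          have h1 : HasDerivAt (fun t : ℝ => -(2*t)) (-2) t := by
            exact (((hasDerivAt_id t).const_mul (2:ℝ)).neg).congr_deriv (by ring)
          have := (Real.hasDerivAt_exp (-(2*t))).comp t h1
          exact this.congr_deriv (by ring)
        exact houter.mul hexp)
      (by
        rintro t ⟨htIoo, hts⟩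
        have htmem : t ∈ Set.Icc 0 T := hsub ⟨htIoo.1.le, htIoo.2.le⟩
        have hut := hu t htmem
        have hexp : 0 < Real.exp (-(2*t)) := Real.exp_pos _
        show 2 * max (Δm t - cc) 0 * (-1 - Δm t * u t) * Real.exp (-(2*t)) +
          max (Δm t - cc) 0 ^ 2 * (-2 * Real.exp (-(2*t))) ≤ 0
        by_cases hm : Δm t ≤ cc
        · rw [max_eq_right (by linarith)]
          simp
        · push_neg at hm
          rw [max_eq_left (by linarith)]
          have h1 : -1 - Δm t * u t ≤ Δm t - cc := by
            nlinarith [hut.1, hut.2]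
          have hq : 0 ≤ Δm t - cc := by linarith
          have hc2 : 0 ≤ 2 * (Δm t - cc) * Real.exp (-(2*t)) :=
            mul_nonneg (mul_nonneg (by norm_num) hq) hexp.le
          have h2 := mul_le_mul_of_nonneg_left h1 hc2
          nlinarith [h2])
      ht₁0
  beta_reduce at hanti
  have hstart : max (Δm t₀ - cc) 0 ^ 2 * Real.exp (-(2*t₀)) = 0 := by
    rw [max_eq_right (by linarith)]
    simp
  rw [hstart] at hanti
  by_contra hm
  push_neg at hm
  have : max (Δm t₁ - cc) 0 ^ 2 * Real.exp (-(2*t₁)) > 0 := by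
    rw [max_eq_left (by linarith)]
    exact mul_pos (pow_pos (by linarith) 2) (Real.exp_pos _)
  linarith

end traj


section main

variable {T lam : ℝ} {Δf Δm u : ℝ → ℝ} {s : Set ℝ}

/-- Upper bound : Δm T ≤ lam² (in the case Δm T > 0), via monotonicity of (1-Δm)(1+Δf). -/
lemma traj_upper (hT : 0 ≤ T) (hcf : ContinuousOn Δf (Set.Icc 0 T))
    (hcm : ContinuousOn Δm (Set.Icc 0 T))
    (hu : ∀ t ∈ Set.Icc 0 T, u t ∈ Set.Icc (-1:ℝ) 1) (hs : s.Countable)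
    (hDf : ∀ t ∈ Set.Ioo 0 T \ s, HasDerivAt Δf (-1 + Δf t * u t) t)
    (hDm : ∀ t ∈ Set.Ioo 0 T \ s, HasDerivAt Δm (-1 - Δm t * u t) t)
    (hfnn : ∀ t ∈ Set.Icc 0 T, 0 ≤ Δf t)
    (hmnn : ∀ t ∈ Set.Icc 0 T, 0 ≤ Δm t)
    (hf0 : Δf 0 = lam) (hm0 : Δm 0 = lam) (hfT : Δf T = 0) :
    Δm T ≤ lam ^ 2 := by
  have hmono := mono_of_deriv_nonneg (φ := fun t => (1 - Δm t) * (1 + Δf t))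
      (c := fun t => (Δf t + Δm t) * (1 + u t)) (a := 0) (b := T) hs
      (by exact (continuousOn_const.sub hcm).mul (continuousOn_const.add hcf))
      (by
        rintro t ⟨htIoo, hts⟩
        have := ((hasDerivAt_const t (1:ℝ)).sub (hDm t ⟨htIoo, hts⟩)).mul
          ((hasDerivAt_const t (1:ℝ)).add (hDf t ⟨htIoo, hts⟩))
        exact this.congr_deriv (by simp only [Pi.add_apply, Pi.sub_apply]; ring))
      (by
        rintro t ⟨htIoo, hts⟩
        have htmem : t ∈ Set.Icc 0 T := ⟨htIoo.1.le, htIoo.2.le⟩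
        have hut := hu t htmem
        show 0 ≤ (Δf t + Δm t) * (1 + u t)
        exact mul_nonneg (by linarith [hfnn t htmem, hmnn t htmem]) (by linarith [hut.1]))
      hT
  beta_reduce at hmono
  rw [hf0, hm0, hfT] at hmono
  nlinarith [hmono]

/-- Lower bound via the value function. -/
lemma traj_lower (hT : 0 ≤ T) (hcf : ContinuousOn Δf (Set.Icc 0 T))
    (hcm : ContinuousOn Δm (Set.Icc 0 T))
    (hu : ∀ t ∈ Set.Icc 0 T, u t ∈ Set.Icc (-1:ℝ) 1) (hs : s.Countable)
    (hDf : ∀ t ∈ Set.Ioo 0 T \ s, HasDerivAt Δf (-1 + Δf t * u t) t)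
    (hDm : ∀ t ∈ Set.Ioo 0 T \ s, HasDerivAt Δm (-1 - Δm t * u t) t)
    (hlam0 : 0 ≤ lam) (hlam1 : lam < 1)
    (hfnn : ∀ t ∈ Set.Icc 0 T, 0 ≤ Δf t)
    (hfle : ∀ t ∈ Set.Icc 0 T, Δf t ≤ lam)
    (hmle : ∀ t ∈ Set.Icc 0 T, Δm t ≤ lam)
    (hf0 : Δf 0 = lam) (hm0 : Δm 0 = lam) (hfT : Δf T = 0) :
    -(4 - lam^2 - 4*Real.sqrt (1 - lam^2)) ≤ Δm T := by
  set s1 := Real.sqrt (1 - lam^2) with hs1def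
  have hs1sq : s1^2 = 1 - lam^2 := Real.sq_sqrt (by nlinarith)
  have hs1nn : 0 ≤ s1 := Real.sqrt_nonneg _
  have hs1le : s1 ≤ 1 := by nlinarith [sq_nonneg (s1 - 1)]
  set A : ℝ → ℝ := fun t => 1 - (1 - Δm t) * (1 + Δf t) with hA
  set B : ℝ → ℝ := fun t => 1 - (2 - Real.sqrt ((1 + Δm t) * (1 - Δf t)))^2 with hB
  set φ : ℝ → ℝ := fun t => if Δf t + Δm t ≤ 0 then A t else B t with hφ
  -- glue equality
  have heqAB : ∀ t ∈ Set.Icc 0 T, Δf t + Δm t = 0 → A t = B t := by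
    intro t ht h0
    have hf1 : Δf t ≤ lam := hfle t ht
    have hm : Δm t = -Δf t := by linarith
    have hsq : Real.sqrt ((1 + Δm t) * (1 - Δf t)) = 1 - Δf t := by
      rw [show (1 + Δm t) = 1 - Δf t by linarith]
      exact Real.sqrt_mul_self (by linarith)
    show 1 - (1 - Δm t) * (1 + Δf t) = 1 - (2 - Real.sqrt ((1 + Δm t) * (1 - Δf t)))^2
    rw [hsq, hm]
    ring
  -- continuity of φ
  have hAcont : ContinuousOn A (Set.Icc 0 T) :=
    continuousOn_const.sub ((continuousOn_const.sub hcm).mul (continuousOn_const.add hcf))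
  have hBcont : ContinuousOn B (Set.Icc 0 T) := by
    apply continuousOn_const.sub
    apply ContinuousOn.pow
    apply continuousOn_const.sub
    exact Real.continuous_sqrt.comp_continuousOn
      ((continuousOn_const.add hcm).mul (continuousOn_const.sub hcf))
  have hφcont : ContinuousOn φ (Set.Icc 0 T) := by
    intro t ht
    have hScont : ContinuousWithinAt (fun z => Δf z + Δm z) (Set.Icc 0 T) t :=
      (hcf t ht).add (hcm t ht)
    rcases lt_trichotomy (Δf t + Δm t) 0 with hlt | heq0 | hgt
    · have hev : ∀ᶠ z in 𝓝[Set.Icc 0 T] t, Δf z + Δm z < 0 := hScont (Iio_mem_nhds hlt)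
      exact (hAcont t ht).congr_of_eventuallyEq
        (hev.mono (fun z hz => if_pos hz.le)) (if_pos hlt.le)
    · have hABt : A t = B t := heqAB t ht heq0
      have hφt : φ t = A t := if_pos heq0.le
      have hAt := hAcont t ht
      have hBt := hBcont t ht
      show Filter.Tendsto φ (𝓝[Set.Icc 0 T] t) (𝓝 (φ t))
      have hmin : Filter.Tendsto (fun z => min (A z) (B z)) (𝓝[Set.Icc 0 T] t)
          (𝓝 (min (A t) (B t))) := hAt.min hBt
      have hmax : Filter.Tendsto (fun z => max (A z) (B z)) (𝓝[Set.Icc 0 T] t)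
          (𝓝 (max (A t) (B t))) := hAt.max hBt
      rw [show min (A t) (B t) = φ t by rw [hφt, hABt, min_self]] at hmin
      rw [show max (A t) (B t) = φ t by rw [hφt, hABt, max_self]] at hmax
      apply tendsto_of_tendsto_of_tendsto_of_le_of_le hmin hmax
      · intro z
        by_cases hz : Δf z + Δm z ≤ 0
        · rw [show φ z = A z from if_pos hz]; exact min_le_left _ _
        · rw [show φ z = B z from if_neg hz]; exact min_le_right _ _
      · intro z
        by_cases hz : Δf z + Δm z ≤ 0
        · rw [show φ z = A z from if_pos hz]; exact le_max_left _ _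
        · rw [show φ z = B z from if_neg hz]; exact le_max_right _ _
    · have hev : ∀ᶠ z in 𝓝[Set.Icc 0 T] t, 0 < Δf z + Δm z := hScont (Ioi_mem_nhds hgt)
      exact (hBcont t ht).congr_of_eventuallyEq
        (hev.mono (fun z hz => if_neg (not_le.2 hz))) (if_neg (not_le.2 hgt))
  -- derivative function
  set c : ℝ → ℝ := fun t =>
    if Δf t + Δm t < 0 then -((Δf t + Δm t) * (1 + u t))
    else 2 * (2 - Real.sqrt ((1 + Δm t) * (1 - Δf t))) *
      (1 / (2 * Real.sqrt ((1 + Δm t) * (1 - Δf t))) * ((Δf t + Δm t) * (1 - u t))) with hc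
  have hkey : ∀ t ∈ Set.Ioo 0 T \ s, HasDerivAt φ (c t) t ∧ 0 ≤ c t := by
    rintro t ⟨htIoo, hts⟩
    have htmem : t ∈ Set.Icc 0 T := ⟨htIoo.1.le, htIoo.2.le⟩
    have hut := hu t htmem
    have hft0 : 0 ≤ Δf t := hfnn t htmem
    have hft1 : Δf t ≤ lam := hfle t htmem
    have hmt1 : Δm t ≤ lam := hmle t htmem
    have hDft := hDf t ⟨htIoo, hts⟩
    have hDmt := hDm t ⟨htIoo, hts⟩
    have hAderiv : HasDerivAt A (-((Δf t + Δm t) * (1 + u t))) t := by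
      have := (hasDerivAt_const t (1:ℝ)).sub
        (((hasDerivAt_const t (1:ℝ)).sub hDmt).mul ((hasDerivAt_const t (1:ℝ)).add hDft))
      exact this.congr_deriv (by simp only [Pi.add_apply, Pi.sub_apply]; ring)
    have hScont : ContinuousAt (fun z => Δf z + Δm z) t :=
      (hDft.continuousAt).add (hDmt.continuousAt)
    rcases lt_trichotomy (Δf t + Δm t) 0 with hlt | heq0 | hgt
    · -- region S < 0
      have hev : ∀ᶠ z in 𝓝 t, Δf z + Δm z < 0 := hScont (Iio_mem_nhds hlt)
      have hder : HasDerivAt φ (-((Δf t + Δm t) * (1 + u t))) t :=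
        hAderiv.congr_of_eventuallyEq (hev.mono (fun z hz => if_pos hz.le))
      rw [hc]
      constructor
      · simpa [hlt] using hder
      · simp only [if_pos hlt]
        nlinarith [mul_nonneg (by linarith : (0:ℝ) ≤ -(Δf t + Δm t))
          (by linarith [hut.1] : (0:ℝ) ≤ 1 + u t)]
    all_goals {
      -- region S ≥ 0 : need H > 0 and sqrt derivative
      first
      | (have hSnn : (0:ℝ) ≤ Δf t + Δm t := le_of_eq heq0.symm)
      | (have hSnn : (0:ℝ) ≤ Δf t + Δm t := hgt.le)
      have hHpos : 0 < (1 + Δm t) * (1 - Δf t) := by nlinarith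
      have hHne : (1 + Δm t) * (1 - Δf t) ≠ 0 := ne_of_gt hHpos
      have hHderiv : HasDerivAt (fun z => (1 + Δm z) * (1 - Δf z))
          ((Δf t + Δm t) * (1 - u t)) t := by
        have := ((hasDerivAt_const t (1:ℝ)).add hDmt).mul
          ((hasDerivAt_const t (1:ℝ)).sub hDft)
        exact this.congr_deriv (by simp only [Pi.add_apply, Pi.sub_apply]; ring)
      have hsqrtH : HasDerivAt (fun z => Real.sqrt ((1 + Δm z) * (1 - Δf z)))
          (1 / (2 * Real.sqrt ((1 + Δm t) * (1 - Δf t))) * ((Δf t + Δm t) * (1 - u t))) t := by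
        have := (Real.hasDerivAt_sqrt hHne).comp t hHderiv
        exact this.congr_deriv (by ring)
      have hBderiv : HasDerivAt B (2 * (2 - Real.sqrt ((1 + Δm t) * (1 - Δf t))) *
          (1 / (2 * Real.sqrt ((1 + Δm t) * (1 - Δf t))) * ((Δf t + Δm t) * (1 - u t)))) t := by
        have h1 := ((hasDerivAt_const t (2:ℝ)).sub hsqrtH).pow 2
        have := (hasDerivAt_const t (1:ℝ)).sub h1
        exact this.congr_deriv (by simp only [Pi.add_apply, Pi.sub_apply]; ring)
      have hsqle : Real.sqrt ((1 + Δm t) * (1 - Δf t)) ≤ 2 := by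
        have h4 : (1 + Δm t) * (1 - Δf t) ≤ 4 := by nlinarith
        calc Real.sqrt ((1 + Δm t) * (1 - Δf t)) ≤ Real.sqrt 4 := Real.sqrt_le_sqrt h4
          _ = 2 := by
              rw [show (4:ℝ) = 2^2 by norm_num, Real.sqrt_sq (by norm_num : (0:ℝ) ≤ 2)]
      have hsqnn : 0 ≤ Real.sqrt ((1 + Δm t) * (1 - Δf t)) := Real.sqrt_nonneg _
      have hcnn : 0 ≤ c t := by
        rw [hc]
        simp only [if_neg (not_lt.2 hSnn)]
        apply mul_nonneg (by linarith)
        apply mul_nonneg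
        · positivity
        · exact mul_nonneg hSnn (by linarith [hut.2])
      refine ⟨?_, hcnn⟩
      first
      | -- case S > 0 : φ equals B near t
        (have hev : ∀ᶠ z in 𝓝 t, 0 < Δf z + Δm z := hScont (Ioi_mem_nhds hgt)
         have hder : HasDerivAt φ (2 * (2 - Real.sqrt ((1 + Δm t) * (1 - Δf t))) *
            (1 / (2 * Real.sqrt ((1 + Δm t) * (1 - Δf t))) * ((Δf t + Δm t) * (1 - u t)))) t :=
           hBderiv.congr_of_eventuallyEq (hev.mono (fun z hz => if_neg (not_le.2 hz)))
         rw [hc]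
         simpa [not_lt.2 hSnn] using hder)
      | -- case S = 0 : glue, derivative 0 by squeeze
        (have hc0 : c t = 0 := by
           rw [hc]
           simp only [if_neg (not_lt.2 hSnn)]
           rw [heq0]
           ring
         rw [hc0]
         have hA0 : HasDerivAt A 0 t := by
           have : -((Δf t + Δm t) * (1 + u t)) = 0 := by rw [heq0]; ring
           rwa [this] at hAderiv
         have hB0 : HasDerivAt B 0 t := by
           have : 2 * (2 - Real.sqrt ((1 + Δm t) * (1 - Δf t))) *
              (1 / (2 * Real.sqrt ((1 + Δm t) * (1 - Δf t))) * ((Δf t + Δm t) * (1 - u t))) = 0 := by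
             rw [heq0]; ring
           rwa [this] at hBderiv
         have hABt : A t = B t := heqAB t htmem heq0
         have hφt : φ t = A t := if_pos heq0.le
         rw [hasDerivAt_iff_isLittleO]
         have h1 : (fun z => A z - A t) =o[𝓝 t] (fun z => z - t) := by
           have := hasDerivAt_iff_isLittleO.1 hA0
           simpa using this
         have h2 : (fun z => B z - B t) =o[𝓝 t] (fun z => z - t) := by
           have := hasDerivAt_iff_isLittleO.1 hB0
           simpa using this
         have hsum := h1.norm_left.add h2.norm_left
         have hle : ∀ z, ‖φ z - φ t - (z - t) • (0:ℝ)‖ ≤ ‖‖A z - A t‖ + ‖B z - B t‖‖ := by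
           intro z
           simp only [smul_zero, sub_zero]
           rw [Real.norm_eq_abs (‖A z - A t‖ + ‖B z - B t‖)]
           rw [abs_of_nonneg (by positivity)]
           by_cases hz : Δf z + Δm z ≤ 0
           · rw [show φ z = A z from if_pos hz, hφt]
             exact le_add_of_nonneg_right (norm_nonneg _)
           · rw [show φ z = B z from if_neg hz, hφt, hABt]
             exact le_add_of_nonneg_left (norm_nonneg _)
         exact (Asymptotics.isBigO_of_le _ hle).trans_isLittleO hsum)
    }
  have hmono := mono_of_deriv_nonneg (φ := φ) (c := c) hs hφcont
    (fun t ht => (hkey t ht).1) (fun t ht => (hkey t ht).2) hT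
  have hφT : φ T ≤ Δm T := by
    have hTmem : T ∈ Set.Icc 0 T := ⟨hT, le_refl _⟩
    by_cases hmT : Δf T + Δm T ≤ 0
    · apply le_of_eq
      show (if Δf T + Δm T ≤ 0 then A T else B T) = Δm T
      rw [if_pos hmT]
      show 1 - (1 - Δm T) * (1 + Δf T) = Δm T
      rw [hfT]; ring
    · push_neg at hmT
      rw [hfT] at hmT
      have h1m : (0:ℝ) ≤ 1 + Δm T := by linarith
      have hx : Real.sqrt ((1 + Δm T) * (1 - Δf T)) = Real.sqrt (1 + Δm T) := by
        rw [hfT]; norm_num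
      have hxsq : Real.sqrt (1 + Δm T) ^ 2 = 1 + Δm T := Real.sq_sqrt h1m
      show (if Δf T + Δm T ≤ 0 then A T else B T) ≤ Δm T
      rw [if_neg (by rw [hfT]; push_neg; linarith)]
      show 1 - (2 - Real.sqrt ((1 + Δm T) * (1 - Δf T)))^2 ≤ Δm T
      rw [hx]
      nlinarith [sq_nonneg (Real.sqrt (1 + Δm T) - 1)]
  have hφ0 : -(4 - lam^2 - 4*s1) ≤ φ 0 := by
    rcases eq_or_lt_of_le hlam0 with h0 | hpos
    · -- lam = 0
      have hs11 : s1 = 1 := by rw [hs1def, ← h0]; norm_num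
      apply le_of_le_of_eq (b := (0:ℝ))
      · rw [hs11, ← h0]; norm_num
      · show (0:ℝ) = if Δf 0 + Δm 0 ≤ 0 then A 0 else B 0
        rw [hf0, hm0, if_pos (by linarith)]
        show (0:ℝ) = 1 - (1 - Δm 0) * (1 + Δf 0)
        rw [hf0, hm0, ← h0]; ring
    · apply le_of_eq
      show -(4 - lam^2 - 4*s1) = if Δf 0 + Δm 0 ≤ 0 then A 0 else B 0
      rw [hf0, hm0, if_neg (by push_neg; linarith)]
      show -(4 - lam^2 - 4*s1) = 1 - (2 - Real.sqrt ((1 + Δm 0) * (1 - Δf 0)))^2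
      rw [hf0, hm0, show (1 + lam) * (1 - lam) = 1 - lam^2 by ring, ← hs1def]
      linear_combination hs1sq
  linarith

end main

/-- The controlled system `Δf' = -1 + Δf·u`, `Δm' = -1 - Δm·u` with control `u(t) ∈ [-1,1]`,
formulated for absolutely continuous trajectories: continuous on `[0,T]` and differentiable
with the prescribed derivatives outside a countable exceptional set. -/
def IsTrajectory (T lam : ℝ) (Δf Δm u : ℝ → ℝ) : Prop :=
  0 ≤ T ∧
  ContinuousOn Δf (Set.Icc 0 T) ∧ ContinuousOn Δm (Set.Icc 0 T) ∧
  (∀ t ∈ Set.Icc 0 T, u t ∈ Set.Icc (-1:ℝ) 1) ∧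
  (∃ s : Set ℝ, s.Countable ∧
    (∀ t ∈ Set.Ioo 0 T \ s, HasDerivAt Δf (-1 + Δf t * u t) t) ∧
    (∀ t ∈ Set.Ioo 0 T \ s, HasDerivAt Δm (-1 - Δm t * u t) t)) ∧
  Δf 0 = lam ∧ Δm 0 = lam ∧ Δf T = 0



lemma traj_exists (lam : ℝ) (hlam0 : 0 ≤ lam) (hlam1 : lam < 1) :
    ∃ (T : ℝ) (Δf Δm u : ℝ → ℝ), IsTrajectory T lam Δf Δm u ∧
      |Δm T| = 4 - lam^2 - 4*Real.sqrt (1 - lam^2) := by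
  set s1 := Real.sqrt (1 - lam^2) with hs1def
  have hs1sq : s1^2 = 1 - lam^2 := Real.sq_sqrt (by nlinarith)
  have hs1nn : 0 ≤ s1 := Real.sqrt_nonneg _
  have hs1le : s1 ≤ 1 := by nlinarith [sq_nonneg (s1 - 1)]
  have h1l : (0:ℝ) < 1 - lam := by linarith
  have h1l' : (0:ℝ) < 1 + lam := by linarith
  set r := Real.sqrt ((1+lam)/(1-lam)) with hrdef
  have hrpos : 0 < r := Real.sqrt_pos.2 (by positivity)
  have hr1 : 1 ≤ r := by
    have h2 : (1:ℝ) ≤ (1+lam)/(1-lam) := by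
      rw [le_div_iff₀ h1l]; linarith
    calc (1:ℝ) = Real.sqrt 1 := by simp
      _ ≤ r := Real.sqrt_le_sqrt h2
  set t₁ := Real.log r with ht₁def
  have ht₁nn : 0 ≤ t₁ := Real.log_nonneg hr1
  have hexpt₁ : Real.exp t₁ = r := Real.exp_log hrpos
  have hs2pos : (0:ℝ) < 2 - s1 := by linarith
  have hs2ge : (1:ℝ) ≤ 2 - s1 := by linarith
  set T := t₁ + Real.log (2 - s1) with hTdef
  have hTt₁ : t₁ ≤ T := by
    rw [hTdef]; linarith [Real.log_nonneg hs2ge]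
  have hT0 : 0 ≤ T := le_trans ht₁nn hTt₁
  have hkey1 : (1-lam) * r = s1 := by
    rw [hrdef, hs1def, show (1-lam) = Real.sqrt ((1-lam)^2) by rw [Real.sqrt_sq h1l.le],
      ← Real.sqrt_mul (sq_nonneg _)]
    congr 1
    rw [Real.sqrt_sq h1l.le]
    field_simp
    ring
  have hkey2' : 1 + lam = s1 * r := by
    have h3 : (1+lam)*(1-lam) = (s1*r)*(1-lam) := by linear_combination (-s1) * hkey1 - hs1sq
    exact mul_right_cancel₀ (ne_of_gt h1l) h3
  have hkey2 : (1+lam) / r = s1 := by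
    rw [hkey2', mul_div_assoc, div_self (ne_of_gt hrpos), mul_one]
  have hexpnegt₁ : Real.exp (-t₁) = 1 / r := by
    rw [Real.exp_neg, hexpt₁, one_div]
  -- the trajectory
  set F : ℝ → ℝ := fun t => if t ≤ t₁ then 1 - (1-lam)*Real.exp t
    else (2-s1)*Real.exp (t₁ - t) - 1 with hF
  set M : ℝ → ℝ := fun t => if t ≤ t₁ then (1+lam)*Real.exp (-t) - 1
    else 1 - (2-s1)*Real.exp (t - t₁) with hM
  set U : ℝ → ℝ := fun t => if t ≤ t₁ then 1 else -1 with hU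
  have hFt₁ : (1:ℝ) - (1-lam)*Real.exp t₁ = (2-s1)*Real.exp (t₁ - t₁) - 1 := by
    rw [hexpt₁, hkey1, sub_self, Real.exp_zero]
    ring
  have hMt₁ : (1+lam)*Real.exp (-t₁) - 1 = 1 - (2-s1)*Real.exp (t₁ - t₁) := by
    rw [hexpnegt₁, sub_self, Real.exp_zero]
    rw [mul_one_div, hkey2]
    ring
  have hFcont : Continuous F := by
    apply Continuous.if_le
    · exact continuous_const.sub (continuous_const.mul Real.continuous_exp)
    · exact (continuous_const.mul
        (Real.continuous_exp.comp (continuous_const.sub continuous_id))).sub continuous_const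
    · exact continuous_id
    · exact continuous_const
    · intro x hx
      subst hx
      exact hFt₁
  have hMcont : Continuous M := by
    apply Continuous.if_le
    · exact (continuous_const.mul (Real.continuous_exp.comp continuous_neg)).sub continuous_const
    · exact continuous_const.sub (continuous_const.mul
        (Real.continuous_exp.comp (continuous_id.sub continuous_const)))
    · exact continuous_id
    · exact continuous_const
    · intro x hx
      subst hx
      exact hMt₁
  have hF0 : F 0 = lam := by
    simp only [hF, if_pos ht₁nn, Real.exp_zero]
    ring
  have hM0 : M 0 = lam := by
    simp only [hM, if_pos ht₁nn, neg_zero, Real.exp_zero]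
    ring
  have hFT : F T = 0 := by
    rcases eq_or_lt_of_le hTt₁ with heq | hlt
    · -- T = t₁, so log (2-s1) = 0, so s1 = 1
      have hlog0 : Real.log (2 - s1) = 0 := by
        rw [hTdef] at heq; linarith
      have hs11 : (2:ℝ) - s1 = 1 := by
        rcases Real.log_eq_zero.1 hlog0 with h | h | h
        · linarith
        · exact h
        · linarith
      simp only [hF, if_pos heq.ge]
      rw [← heq, hexpt₁, hkey1]
      linarith
    · simp only [hF, if_neg (not_le.2 hlt)]
      rw [show t₁ - T = -Real.log (2-s1) by rw [hTdef]; ring]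
      rw [Real.exp_neg, Real.exp_log hs2pos]
      field_simp
      norm_num
  have hU1 : ∀ t ∈ Set.Icc (0:ℝ) T, U t ∈ Set.Icc (-1:ℝ) 1 := by
    intro t ht
    simp only [hU]
    by_cases h : t ≤ t₁
    · rw [if_pos h]; constructor <;> norm_num
    · rw [if_neg h]; constructor <;> norm_num
  have hDF : ∀ t ∈ Set.Ioo 0 T \ {t₁}, HasDerivAt F (-1 + F t * U t) t := by
    rintro t ⟨htIoo, hts⟩
    have htne : t ≠ t₁ := hts
    rcases lt_or_gt_of_ne htne with hlt | hgt
    · have hd : HasDerivAt (fun z => 1 - (1-lam)*Real.exp z) (-((1-lam)*Real.exp t)) t := by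
        have := (hasDerivAt_const t (1:ℝ)).sub ((Real.hasDerivAt_exp t).const_mul (1-lam))
        exact this.congr_deriv (by ring)
      have hev : F =ᶠ[𝓝 t] (fun z => 1 - (1-lam)*Real.exp z) := by
        filter_upwards [Iio_mem_nhds hlt] with z hz
        exact if_pos hz.le
      have := hd.congr_of_eventuallyEq hev
      refine this.congr_deriv ?_
      simp only [hF, hU, if_pos hlt.le]
      ring
    · have hd1 : HasDerivAt (fun z : ℝ => t₁ - z) (-1) t := by
        exact ((hasDerivAt_const t t₁).sub (hasDerivAt_id t)).congr_deriv (by ring)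
      have hd2 : HasDerivAt (fun z => Real.exp (t₁ - z)) (-Real.exp (t₁ - t)) t := by
        have := (Real.hasDerivAt_exp (t₁ - t)).comp t hd1
        exact this.congr_deriv (by ring)
      have hd : HasDerivAt (fun z => (2-s1)*Real.exp (t₁ - z) - 1)
          (-((2-s1)*Real.exp (t₁ - t))) t := by
        have := (hd2.const_mul (2-s1)).sub_const 1
        exact this.congr_deriv (by ring)
      have hev : F =ᶠ[𝓝 t] (fun z => (2-s1)*Real.exp (t₁ - z) - 1) := by
        filter_upwards [Ioi_mem_nhds hgt] with z hz
        exact if_neg (not_le.2 hz)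
      have := hd.congr_of_eventuallyEq hev
      refine this.congr_deriv ?_
      simp only [hF, hU, if_neg (not_le.2 hgt)]
      ring
  have hDM : ∀ t ∈ Set.Ioo 0 T \ {t₁}, HasDerivAt M (-1 - M t * U t) t := by
    rintro t ⟨htIoo, hts⟩
    have htne : t ≠ t₁ := hts
    rcases lt_or_gt_of_ne htne with hlt | hgt
    · have hd1 : HasDerivAt (fun z : ℝ => Real.exp (-z)) (-Real.exp (-t)) t := by
        have := (Real.hasDerivAt_exp (-t)).comp t (hasDerivAt_neg t)
        exact this.congr_deriv (by ring)
      have hd : HasDerivAt (fun z => (1+lam)*Real.exp (-z) - 1)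
          (-((1+lam)*Real.exp (-t))) t := by
        have := (hd1.const_mul (1+lam)).sub_const 1
        exact this.congr_deriv (by ring)
      have hev : M =ᶠ[𝓝 t] (fun z => (1+lam)*Real.exp (-z) - 1) := by
        filter_upwards [Iio_mem_nhds hlt] with z hz
        exact if_pos hz.le
      have := hd.congr_of_eventuallyEq hev
      refine this.congr_deriv ?_
      simp only [hM, hU, if_pos hlt.le]
      ring
    · have hd1 : HasDerivAt (fun z : ℝ => z - t₁) 1 t := by
        exact ((hasDerivAt_id t).sub_const t₁).congr_deriv (by ring)
      have hd2 : HasDerivAt (fun z => Real.exp (z - t₁)) (Real.exp (t - t₁)) t := by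
        have := (Real.hasDerivAt_exp (t - t₁)).comp t hd1
        exact this.congr_deriv (by ring)
      have hd : HasDerivAt (fun z => 1 - (2-s1)*Real.exp (z - t₁))
          (-((2-s1)*Real.exp (t - t₁))) t := by
        have := (hasDerivAt_const t (1:ℝ)).sub (hd2.const_mul (2-s1))
        exact this.congr_deriv (by ring)
      have hev : M =ᶠ[𝓝 t] (fun z => 1 - (2-s1)*Real.exp (z - t₁)) := by
        filter_upwards [Ioi_mem_nhds hgt] with z hz
        exact if_neg (not_le.2 hz)
      have := hd.congr_of_eventuallyEq hev
      refine this.congr_deriv ?_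
      simp only [hM, hU, if_neg (not_le.2 hgt)]
      ring
  have hMT : |M T| = 4 - lam^2 - 4*s1 := by
    rcases eq_or_lt_of_le hTt₁ with heq | hlt
    · have hlog0 : Real.log (2 - s1) = 0 := by
        rw [hTdef] at heq; linarith
      have hs11 : (2:ℝ) - s1 = 1 := by
        rcases Real.log_eq_zero.1 hlog0 with h | h | h
        · linarith
        · exact h
        · linarith
      have hlam2 : lam^2 = 0 := by nlinarith
      have hs1e : s1 = 1 := by linarith
      simp only [hM, if_pos heq.ge]
      rw [← heq, hexpnegt₁, mul_one_div, hkey2, hs1e, hlam2]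
      norm_num
    · simp only [hM, if_neg (not_le.2 hlt)]
      rw [show T - t₁ = Real.log (2-s1) by rw [hTdef]; ring, Real.exp_log hs2pos]
      rw [abs_of_nonpos (by nlinarith)]
      linear_combination hs1sq
  exact ⟨T, F, M, U, ⟨hT0, hFcont.continuousOn, hMcont.continuousOn, hU1,
    ⟨{t₁}, Set.countable_singleton _, hDF, hDM⟩, hF0, hM0, hFT⟩, by rw [hMT]⟩


theorem stmt_17 (lam : ℝ) (hlam0 : 0 ≤ lam) (hlam1 : lam < 1) :
    (∀ (T : ℝ) (Δf Δm u : ℝ → ℝ), IsTrajectory T lam Δf Δm u →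
      |Δm T| ≤ 4 - lam^2 - 4*Real.sqrt (1 - lam^2)) ∧
    (∃ (T : ℝ) (Δf Δm u : ℝ → ℝ), IsTrajectory T lam Δf Δm u ∧
      |Δm T| = 4 - lam^2 - 4*Real.sqrt (1 - lam^2)) := by
  constructor
  · rintro T Δf Δm u ⟨hT, hcf, hcm, hu, ⟨s, hs, hDf, hDm⟩, hf0, hm0, hfT⟩
    set s1 := Real.sqrt (1 - lam^2) with hs1def
    have hs1sq : s1^2 = 1 - lam^2 := Real.sq_sqrt (by nlinarith)
    have hs1nn : 0 ≤ s1 := Real.sqrt_nonneg _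
    have hs1le : s1 ≤ 1 := by nlinarith [sq_nonneg (s1 - 1)]
    have hB0 : 0 ≤ 4 - lam^2 - 4*s1 := by nlinarith [sq_nonneg (s1 - 1)]
    have hfnn : ∀ t ∈ Set.Icc 0 T, 0 ≤ Δf t :=
      traj_f_nonneg hT hcf hu hs hDf (by rw [hf0]; exact hlam0) hfT
    have hfle : ∀ t ∈ Set.Icc 0 T, Δf t ≤ lam :=
      traj_f_le hT hcf hu hs hDf hfnn hf0 hlam1.le
    have hmle : ∀ t ∈ Set.Icc 0 T, Δm t ≤ lam := by
      have := traj_m_le hT hcm hu hs hDm hlam0 hlam1.le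
        (Set.left_mem_Icc.2 hT) (le_of_eq hm0)
      intro t ht
      exact this t ⟨ht.1, ht.2⟩
    have hlow : -(4 - lam^2 - 4*s1) ≤ Δm T :=
      traj_lower hT hcf hcm hu hs hDf hDm hlam0 hlam1 hfnn hfle hmle hf0 hm0 hfT
    have hupp : Δm T ≤ 4 - lam^2 - 4*s1 := by
      rcases le_or_gt (Δm T) 0 with hneg | hpos
      · linarith
      · have hmpos : ∀ t ∈ Set.Icc 0 T, 0 ≤ Δm t := by
          intro t ht
          by_contra hc
          push_neg at hc
          have := traj_m_le hT hcm hu hs hDm (le_refl (0:ℝ)) (by norm_num) ht hc.le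
          have := this T ⟨ht.2, le_refl _⟩
          linarith
        have := traj_upper hT hcf hcm hu hs hDf hDm hfnn hmpos hf0 hm0 hfT
        nlinarith [sq_nonneg (1 - s1)]
    rw [abs_le]
    exact ⟨by linarith, by linarith⟩
  · exact traj_exists lam hlam0 hlam1
end

section
/- Let x̂ ∈ ℝⁿ, g ∈ ℝⁿ, and let G be a symmetric positive definite n×n matrix. Define q(x) = c − (1/2) log((1 − ⟨g, x − x̂⟩)² − (x − x̂)ᵀG(x − x̂)) on the open set E = { x : 1 − ⟨g, x − x̂⟩ > √((x−x̂)ᵀG(x−x̂)) }. Then q(x̂) = c, q'(x̂) = g, q''(x̂) = G + ggᵀ, and q satisfies the projective self-concordance identity C(x)[h,h,h] = 0 and q''(x) − q'(x)q'(x)ᵀ ≻ 0 for all x ∈ E, i.e. q is projectively self-concordant on E with parameter γ = 0. -/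
open Filter

variable {E : Type*} [NormedAddCommGroup E] [NormedSpace ℝ E]

/-- A regular convex set: closed, convex, with nonempty interior, containing no lines. -/
def IsRegularConvex (X : Set E) : Prop :=
  IsClosed X ∧ Convex ℝ X ∧ (interior X).Nonempty ∧
    ∀ x d : E, d ≠ 0 → ¬ (∀ t : ℝ, x + t • d ∈ X)

/-- Affine metric `G(x)[h,h] = f''(x)[h,h] - (f'(x)[h])²`. -/
noncomputable def affMetric (f : E → ℝ) (x h : E) : ℝ :=
  iteratedFDeriv ℝ 2 f x (fun _ => h) - (fderiv ℝ f x h)^2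

/-- Cubic form `C(x)[h,h,h]`. -/
noncomputable def cubicForm (f : E → ℝ) (x h : E) : ℝ :=
  iteratedFDeriv ℝ 3 f x (fun _ => h)
    - 6 * iteratedFDeriv ℝ 2 f x (fun _ => h) * fderiv ℝ f x h
    + 4 * (fderiv ℝ f x h)^3

/-- Projectively self-concordant barrier with parameter γ on X. -/
def IsPSCBarrier (X : Set E) (f : E → ℝ) (γ : ℝ) : Prop :=
  ContDiffOn ℝ 3 f (interior X) ∧
  (∀ x ∈ interior X, ∀ h : E, h ≠ 0 → 0 < affMetric f x h) ∧
  (∀ x ∈ frontier X, Tendsto f (nhdsWithin x (interior X)) atTop) ∧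
  (∀ x ∈ interior X, ∀ h : E, |cubicForm f x h| ≤ 2 * γ * (affMetric f x h) ^ ((3:ℝ)/2))

/-- `σ_x(h) = inf { 1/t : t > 0, x + t•h ∈ X }`. -/
noncomputable def sigmaDist (X : Set E) (x h : E) : ℝ :=
  sInf {r : ℝ | ∃ t : ℝ, 0 < t ∧ x + t • h ∈ X ∧ r = 1/t}

section PSCAux

open Matrix

private lemma psc_iteratedDeriv_line {E : Type*} [NormedAddCommGroup E] [NormedSpace ℝ E]
    {f : E → ℝ} {s : Set E} (hs : IsOpen s) (hf : ContDiffOn ℝ (⊤ : ℕ∞) f s) (n : ℕ) :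
    ∀ x ∈ s, ∀ h : E,
      iteratedDeriv n (fun t : ℝ => f (x + t • h)) 0 = iteratedFDeriv ℝ n f x (fun _ => h) := by
  induction n with
  | zero =>
    intro x hx h
    simp [iteratedDeriv_zero, iteratedFDeriv_zero_apply]
  | succ n ih =>
    intro x hx h
    have hcont : Continuous fun t : ℝ => x + t • h :=
      continuous_const.add (continuous_id.smul continuous_const)
    have hT : IsOpen {t : ℝ | x + t • h ∈ s} := hs.preimage hcont
    have hmem : (0 : ℝ) ∈ {t : ℝ | x + t • h ∈ s} := by simpa using hx
    have hev : iteratedDeriv n (fun t : ℝ => f (x + t • h)) =ᶠ[nhds (0:ℝ)]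
        fun t => iteratedFDeriv ℝ n f (x + t • h) (fun _ => h) := by
      filter_upwards [hT.mem_nhds hmem] with t ht
      have e1 : (fun z : ℝ => f (x + (z + t) • h)) = fun z : ℝ => f ((x + t • h) + z • h) := by
        funext z; congr 1; rw [add_smul]; abel
      have e2 : iteratedDeriv n (fun z : ℝ => f (x + (z + t) • h)) 0
          = iteratedDeriv n (fun z : ℝ => f (x + z • h)) t := by
        have := congrFun (iteratedDeriv_comp_add_const n (fun z : ℝ => f (x + z • h)) t) 0
        simpa using this
      rw [← e2, e1]
      exact ih _ ht h
    rw [iteratedDeriv_succ, hev.deriv_eq]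
    have hdiff : DifferentiableAt ℝ (iteratedFDeriv ℝ n f) x := by
      have h1 : DifferentiableOn ℝ (iteratedFDerivWithin ℝ n f s) s :=
        hf.differentiableOn_iteratedFDerivWithin
          (by exact_mod_cast lt_top_iff_ne_top.2 (by simp : (n : ℕ∞) ≠ ⊤)) hs.uniqueDiffOn
      have h2 : DifferentiableAt ℝ (iteratedFDerivWithin ℝ n f s) x :=
        h1.differentiableAt (hs.mem_nhds hx)
      apply h2.congr_of_eventuallyEq
      filter_upwards [hs.mem_nhds hx] with y hy
      exact (iteratedFDerivWithin_of_isOpen n hs hy).symm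
    have hc2 := hdiff.hasFDerivAt.continuousMultilinear_apply_const (fun _ : Fin n => h)
    have h0 : x = x + (0:ℝ) • h := by simp
    rw [h0] at hc2
    have hcurve : HasDerivAt (fun t : ℝ => x + t • h) h (0:ℝ) := by
      simpa using ((hasDerivAt_id (0:ℝ)).smul_const h).const_add x
    have hcomp : HasDerivAt (fun t : ℝ => (iteratedFDeriv ℝ n f (x + t • h)) fun _ => h)
        (((fderiv ℝ (iteratedFDeriv ℝ n f) (x + (0:ℝ) • h)).flipMultilinear fun _ => h) h) 0 :=
      by have := hc2.comp_hasDerivAt (0:ℝ) hcurve; exact this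
    rw [hcomp.deriv, ← h0, iteratedFDeriv_succ_apply_left]
    rfl

private lemma psc_oneD (c A B C : ℝ) (hA : 0 < A) :
    deriv (fun t : ℝ => c - 1/2 * Real.log (A + B*t + C*t^2)) 0 = -B/(2*A) ∧
    iteratedDeriv 2 (fun t : ℝ => c - 1/2 * Real.log (A + B*t + C*t^2)) 0
      = (B^2 - 2*C*A)/(2*A^2) ∧
    iteratedDeriv 3 (fun t : ℝ => c - 1/2 * Real.log (A + B*t + C*t^2)) 0
      = B*(3*C*A - B^2)/A^3 := by
  set P : ℝ → ℝ := fun t => A + B*t + C*t^2 with hP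
  set F : ℝ → ℝ := fun t => c - 1/2 * Real.log (P t) with hF
  set d1 : ℝ → ℝ := fun t => -(B + 2*C*t)/(2 * P t) with hd1
  set d2 : ℝ → ℝ := fun t => ((B + 2*C*t)^2 - 2*C*P t)/(2 * (P t)^2) with hd2
  have hPcont : Continuous P := by fun_prop
  have hPopen : IsOpen {t : ℝ | 0 < P t} := isOpen_lt continuous_const hPcont
  have h0 : (0:ℝ) ∈ {t : ℝ | 0 < P t} := by
    simp only [Set.mem_setOf_eq, hP]; norm_num; exact hA
  have hPd : ∀ t : ℝ, HasDerivAt P (B + 2*C*t) t := by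
    intro t
    have h1 : HasDerivAt (fun t : ℝ => A + B*t + C*t^2) (0 + B*1 + C*(↑2*t^1)) t :=
      ((hasDerivAt_const t A).add ((hasDerivAt_id t).const_mul B)).add
        ((hasDerivAt_pow 2 t).const_mul C)
    convert h1 using 1
    ring
  have hFd : ∀ t ∈ {t : ℝ | 0 < P t}, HasDerivAt F (d1 t) t := by
    intro t ht
    have h1 := ((hPd t).log (ne_of_gt ht)).const_mul (1/2 : ℝ)
    have h2 := (hasDerivAt_const t c).sub h1
    have hPt : P t ≠ 0 := ne_of_gt (by exact ht)
    refine h2.congr_deriv ?_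
    simp only [hd1]
    field_simp
    ring
  have hd1d : ∀ t ∈ {t : ℝ | 0 < P t}, HasDerivAt d1 (d2 t) t := by
    intro t ht
    have hn : HasDerivAt (fun t : ℝ => -(B + 2*C*t)) (-(2*C)) t := by
      have := ((hasDerivAt_id t).const_mul (2*C)).const_add B
      exact this.neg.congr_deriv (by ring)
    have hden : HasDerivAt (fun t : ℝ => 2 * P t) (2*(B + 2*C*t)) t := (hPd t).const_mul 2
    have ht' : (0:ℝ) < P t := ht
    have hPt : P t ≠ 0 := ne_of_gt ht'
    have h1 := hn.div hden (by positivity)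
    refine h1.congr_deriv ?_
    simp only [hd2]
    field_simp
    ring
  have hd2d : ∀ t ∈ {t : ℝ | 0 < P t},
      HasDerivAt d2 ((B + 2*C*t)*(3*C*P t - (B + 2*C*t)^2)/(P t)^3) t := by
    intro t ht
    have hl : HasDerivAt (fun t : ℝ => B + 2*C*t) (2*C) t := by
      simpa using ((hasDerivAt_id t).const_mul (2*C)).const_add B
    have hn : HasDerivAt (fun t : ℝ => (B + 2*C*t)^2 - 2*C*P t)
        (2*(B + 2*C*t)*(2*C) - 2*C*(B + 2*C*t)) t := by
      have h1 := hl.pow 2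
      have h2 := (hPd t).const_mul (2*C)
      have := h1.sub h2
      refine this.congr_deriv ?_
      push_cast; ring
    have hden : HasDerivAt (fun t : ℝ => 2 * (P t)^2) (2*(2*(P t)*(B + 2*C*t))) t := by
      have := ((hPd t).pow 2).const_mul 2
      refine this.congr_deriv ?_
      push_cast; ring
    have ht' : (0:ℝ) < P t := ht
    have hPt : P t ≠ 0 := ne_of_gt ht'
    have h1 := hn.div hden (by positivity)
    refine h1.congr_deriv ?_
    field_simp
    ring
  have hder1 : ∀ t ∈ {t : ℝ | 0 < P t}, deriv F t = d1 t := fun t ht => (hFd t ht).deriv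
  have hev1 : ∀ t ∈ {t : ℝ | 0 < P t}, deriv F =ᶠ[nhds t] d1 := by
    intro t ht
    filter_upwards [hPopen.mem_nhds ht] with z hz
    exact hder1 z hz
  have hder2 : ∀ t ∈ {t : ℝ | 0 < P t}, iteratedDeriv 2 F t = d2 t := by
    intro t ht
    have e : iteratedDeriv 2 F = deriv (deriv F) := by
      rw [show (2:ℕ) = 1 + 1 from rfl, iteratedDeriv_succ, iteratedDeriv_one]
    rw [e, (hev1 t ht).deriv_eq]
    exact (hd1d t ht).deriv
  have hev2 : iteratedDeriv 2 F =ᶠ[nhds (0:ℝ)] d2 := by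
    filter_upwards [hPopen.mem_nhds h0] with z hz
    exact hder2 z hz
  have hP0 : P 0 = A := by simp [hP]
  refine ⟨?_, ?_, ?_⟩
  · rw [hder1 0 h0]
    simp only [hd1, hP0]
    norm_num
  · rw [hder2 0 h0]
    simp only [hd2, hP0]
    norm_num
  · have e : iteratedDeriv 3 F = deriv (iteratedDeriv 2 F) := by
      rw [show (3:ℕ) = 2 + 1 from rfl, iteratedDeriv_succ]
    rw [e, hev2.deriv_eq, (hd2d 0 h0).deriv]
    rw [hP0]
    norm_num

private lemma psc_symm {m : ℕ} (G : Matrix (Fin m) (Fin m) ℝ) (hG : G.IsSymm)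
    (a b : Fin m → ℝ) : a ⬝ᵥ G.mulVec b = b ⬝ᵥ G.mulVec a := by
  rw [Matrix.dotProduct_mulVec]
  nth_rewrite 1 [← hG]
  rw [Matrix.vecMul_transpose, dotProduct_comm]

private lemma psc_dot_contDiff {m : ℕ} (xh g : Fin m → ℝ) :
    ContDiff ℝ (⊤ : ℕ∞) (fun x : Fin m → ℝ => g ⬝ᵥ (x - xh)) := by
  simp only [dotProduct, Pi.sub_apply]
  exact ContDiff.sum fun i _ => contDiff_const.mul
    (((ContinuousLinearMap.proj i : (Fin m → ℝ) →L[ℝ] ℝ).contDiff).sub contDiff_const)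

private lemma psc_quad_contDiff {m : ℕ} (xh : Fin m → ℝ) (G : Matrix (Fin m) (Fin m) ℝ) :
    ContDiff ℝ (⊤ : ℕ∞) (fun x : Fin m → ℝ => (x - xh) ⬝ᵥ G.mulVec (x - xh)) := by
  simp only [dotProduct, Matrix.mulVec, Pi.sub_apply]
  exact ContDiff.sum fun i _ =>
    ((((ContinuousLinearMap.proj i : (Fin m → ℝ) →L[ℝ] ℝ).contDiff).sub contDiff_const).mul
      (ContDiff.sum fun j _ => contDiff_const.mul
        ((((ContinuousLinearMap.proj j : (Fin m → ℝ) →L[ℝ] ℝ).contDiff)).sub contDiff_const)))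

private lemma psc_metric_pos {m : ℕ} (G : Matrix (Fin m) (Fin m) ℝ) (hG : G.IsSymm)
    (hGpd : G.PosDef) (g u h : Fin m → ℝ) (hh0 : h ≠ 0)
    (hx : Real.sqrt (u ⬝ᵥ G.mulVec u) < 1 - g ⬝ᵥ u)
    (r p U W H : ℝ)
    (hrd : r = 1 - g ⬝ᵥ u) (hpd : p = g ⬝ᵥ h) (hUd : U = u ⬝ᵥ G.mulVec u)
    (hWd : W = u ⬝ᵥ G.mulVec h) (hHd : H = h ⬝ᵥ G.mulVec h) (hApos : 0 < r^2 - U) :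
    0 < (r*p + W)^2 - (p^2 - H)*(r^2 - U) := by
  have hpos : ∀ v : Fin m → ℝ, v ≠ 0 → 0 < v ⬝ᵥ G.mulVec v := by
    intro v hv
    have := hGpd.dotProduct_mulVec_pos hv
    simpa using this
  have hnn : ∀ v : Fin m → ℝ, 0 ≤ v ⬝ᵥ G.mulVec v := by
    intro v
    have := hGpd.posSemidef.dotProduct_mulVec_nonneg v
    simpa using this
  have hU0 : 0 ≤ U := by rw [hUd]; exact hnn _
  have hrpos : 0 < r := by
    rw [hrd]; exact lt_of_le_of_lt (Real.sqrt_nonneg _) hx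
  have hHpos : 0 < H := by rw [hHd]; exact hpos h hh0
  rcases eq_or_lt_of_le hU0 with hU0' | hUpos
  · have hu0 : u = 0 := by
      by_contra hne
      have := hpos _ hne
      rw [← hUd, ← hU0'] at this
      exact lt_irrefl 0 this
    have hW0 : W = 0 := by rw [hWd, hu0]; simp
    rw [hW0, ← hU0']
    have e : (r*p + 0)^2 - (p^2 - H)*(r^2 - 0) = H*r^2 := by ring
    rw [e]
    exact mul_pos hHpos (pow_pos hrpos 2)
  · have hCS : W^2 ≤ U * H := by
      have hquad : ∀ t : ℝ, 0 ≤ H * (t*t) + (2*W)*t + U := by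
        intro t
        have h0 := hnn (u + t • h)
        have e : (u + t • h) ⬝ᵥ G.mulVec (u + t • h) = H*(t*t) + (2*W)*t + U := by
          simp only [dotProduct_add, add_dotProduct, dotProduct_smul,
            smul_dotProduct, Matrix.mulVec_add, Matrix.mulVec_smul, smul_eq_mul]
          rw [psc_symm G hG h u]
          rw [← hUd, ← hWd, ← hHd]
          ring
        rw [← e]
        exact h0
      have hd := discrim_le_zero hquad
      rw [discrim] at hd
      have e4 : (2*W)^2 = 4*W^2 := by ring
      linarith
    by_contra hcon
    push_neg at hcon
    have hid : U * ((r*p + W)^2 - (p^2 - H)*(r^2 - U))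
        = (U*p + r*W)^2 + (r^2 - U)*(U*H - W^2) := by ring
    have t2 : 0 ≤ (r^2 - U)*(U*H - W^2) := mul_nonneg (le_of_lt hApos) (by linarith)
    have hUN : U * ((r*p + W)^2 - (p^2 - H)*(r^2 - U)) ≤ 0 :=
      mul_nonpos_of_nonneg_of_nonpos hUpos.le hcon
    have hS2 : (U*p + r*W)^2 = 0 := by linarith [sq_nonneg (U*p + r*W)]
    have e1 : U*p + r*W = 0 := pow_eq_zero_iff two_ne_zero |>.mp hS2
    have hT0 : (r^2 - U)*(U*H - W^2) = 0 := by linarith [sq_nonneg (U*p + r*W)]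
    have e2 : U*H - W^2 = 0 := by
      rcases mul_eq_zero.mp hT0 with h' | h'
      · exact absurd h' (ne_of_gt hApos)
      · exact h'
    have hv : (U • h - W • u) ⬝ᵥ G.mulVec (U • h - W • u) = U*(U*H - W^2) := by
      simp only [sub_dotProduct, dotProduct_sub, smul_dotProduct,
        dotProduct_smul, Matrix.mulVec_sub, Matrix.mulVec_smul, smul_eq_mul]
      rw [psc_symm G hG h u]
      rw [← hUd, ← hWd, ← hHd]
      ring
    have hveq : U • h - W • u = 0 := by
      by_contra hne
      have := hpos _ hne
      rw [hv, e2, mul_zero] at this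
      exact lt_irrefl 0 this
    have e4 : U * p = W * (1 - r) := by
      have h5 : g ⬝ᵥ (U • h - W • u) = 0 := by
        rw [hveq, dotProduct_zero]
      rw [dotProduct_sub, dotProduct_smul, dotProduct_smul,
        smul_eq_mul, smul_eq_mul] at h5
      have hgs : g ⬝ᵥ u = 1 - r := by rw [hrd]; ring
      rw [hgs, ← hpd] at h5
      linarith
    have hW0 : W = 0 := by linear_combination e1 - e4
    have hUH : 0 < U*H := mul_pos hUpos hHpos
    rw [hW0] at e2
    nlinarith [e2]

private lemma psc_derivs {m : ℕ} (xh g : Fin m → ℝ) (c : ℝ) (G : Matrix (Fin m) (Fin m) ℝ)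
    (hG : G.IsSymm)
    (x : Fin m → ℝ) (hx : Real.sqrt ((x - xh) ⬝ᵥ G.mulVec (x - xh)) < 1 - g ⬝ᵥ (x - xh))
    (h : Fin m → ℝ) (r p U W H A : ℝ)
    (hr : r = 1 - g ⬝ᵥ (x - xh)) (hp : p = g ⬝ᵥ h)
    (hU : U = (x - xh) ⬝ᵥ G.mulVec (x - xh)) (hW : W = (x - xh) ⬝ᵥ G.mulVec h)
    (hH : H = h ⬝ᵥ G.mulVec h) (hA : A = r^2 - U) :
    0 < A ∧
    fderiv ℝ (fun y => c - 1/2 * Real.log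
        ((1 - g ⬝ᵥ (y - xh))^2 - (y - xh) ⬝ᵥ G.mulVec (y - xh))) x h = (r*p + W)/A ∧
    iteratedFDeriv ℝ 2 (fun y => c - 1/2 * Real.log
        ((1 - g ⬝ᵥ (y - xh))^2 - (y - xh) ⬝ᵥ G.mulVec (y - xh))) x (fun _ => h)
      = (2*(r*p + W)^2 - (p^2 - H)*A)/A^2 ∧
    iteratedFDeriv ℝ 3 (fun y => c - 1/2 * Real.log
        ((1 - g ⬝ᵥ (y - xh))^2 - (y - xh) ⬝ᵥ G.mulVec (y - xh))) x (fun _ => h)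
      = 2*(r*p + W)*(4*(r*p + W)^2 - 3*(p^2 - H)*A)/A^3 := by
  set q : (Fin m → ℝ) → ℝ := fun y => c - 1/2 * Real.log
      ((1 - g ⬝ᵥ (y - xh))^2 - (y - xh) ⬝ᵥ G.mulVec (y - xh)) with hqdef
  set Eset : Set (Fin m → ℝ) :=
    {y | Real.sqrt ((y - xh) ⬝ᵥ G.mulVec (y - xh)) < 1 - g ⬝ᵥ (y - xh)} with hEdef
  have hopen : IsOpen Eset := by
    apply isOpen_lt
    · exact (Real.continuous_sqrt).comp (psc_quad_contDiff xh G).continuous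
    · exact continuous_const.sub (psc_dot_contDiff xh g).continuous
  have hx' : x ∈ Eset := hx
  have hφpos : ∀ y ∈ Eset, 0 < (1 - g ⬝ᵥ (y - xh))^2 - (y - xh) ⬝ᵥ G.mulVec (y - xh) := by
    intro y hy
    have hy' : Real.sqrt ((y - xh) ⬝ᵥ G.mulVec (y - xh)) < 1 - g ⬝ᵥ (y - xh) := hy
    have hrpos : 0 < 1 - g ⬝ᵥ (y - xh) := lt_of_le_of_lt (Real.sqrt_nonneg _) hy'
    have := (Real.sqrt_lt' hrpos).mp hy'
    linarith
  have hsmooth : ContDiffOn ℝ (⊤ : ℕ∞) q Eset := by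
    apply ContDiffOn.sub contDiffOn_const
    apply ContDiffOn.mul contDiffOn_const
    apply ContDiffOn.log
    · exact (((contDiff_const.sub (psc_dot_contDiff xh g)).pow 2).sub
        (psc_quad_contDiff xh G)).contDiffOn
    · exact fun y hy => ne_of_gt (hφpos y hy)
  have hApos : 0 < A := by
    have := hφpos x hx'
    rw [hA, hr, hU]
    linarith [this]
  have hgs : g ⬝ᵥ (x - xh) = 1 - r := by rw [hr]; ring
  have hline : (fun t : ℝ => q (x + t • h))
      = fun t : ℝ => c - 1/2 * Real.log (A + (-2*(r*p + W))*t + (p^2 - H)*t^2) := by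
    funext t
    have e0 : (x + t • h) - xh = (x - xh) + t • h := by abel
    have key : (1 - g ⬝ᵥ ((x - xh) + t • h))^2 - ((x - xh) + t • h) ⬝ᵥ G.mulVec ((x - xh) + t • h)
        = A + (-2*(r*p + W))*t + (p^2 - H)*t^2 := by
      simp only [dotProduct_add, add_dotProduct, dotProduct_smul,
        smul_dotProduct, Matrix.mulVec_add, Matrix.mulVec_smul, smul_eq_mul]
      rw [psc_symm G hG h (x - xh)]
      rw [← hU, ← hW, ← hH, ← hp, hgs, hA]
      ring
    simp only [hqdef, e0, key]
  have hd1 := (psc_oneD c A (-2*(r*p + W)) (p^2 - H) hApos).1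
  have hd2 := (psc_oneD c A (-2*(r*p + W)) (p^2 - H) hApos).2.1
  have hd3 := (psc_oneD c A (-2*(r*p + W)) (p^2 - H) hApos).2.2
  rw [← hline] at hd1 hd2 hd3
  have hAne : A ≠ 0 := ne_of_gt hApos
  refine ⟨hApos, ?_, ?_, ?_⟩
  · have e1 := psc_iteratedDeriv_line hopen hsmooth 1 x hx' h
    rw [iteratedDeriv_one, hd1, iteratedFDeriv_one_apply] at e1
    rw [← e1]
    field_simp
  · have e2 := psc_iteratedDeriv_line hopen hsmooth 2 x hx' h
    rw [hd2] at e2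
    rw [← e2]
    field_simp
  · have e3 := psc_iteratedDeriv_line hopen hsmooth 3 x hx' h
    rw [hd3] at e3
    rw [← e3]
    field_simp
    ring

end PSCAux

set_option maxHeartbeats 1000000 in
open Matrix in
theorem stmt_18 {n : ℕ} (xh g : Fin n → ℝ) (c : ℝ)
    (G : Matrix (Fin n) (Fin n) ℝ) (hG : G.IsSymm) (hGpd : G.PosDef)
    (q : (Fin n → ℝ) → ℝ)
    (hq : q = fun x => c - (1/2) * Real.log ((1 - g ⬝ᵥ (x - xh))^2 - (x - xh) ⬝ᵥ G.mulVec (x - xh)))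
    (Eset : Set (Fin n → ℝ))
    (hE : Eset = {x | Real.sqrt ((x - xh) ⬝ᵥ G.mulVec (x - xh)) < 1 - g ⬝ᵥ (x - xh)}) :
    q xh = c ∧
    (∀ h : Fin n → ℝ, fderiv ℝ q xh h = g ⬝ᵥ h) ∧
    (∀ h : Fin n → ℝ, iteratedFDeriv ℝ 2 q xh (fun _ => h) = h ⬝ᵥ G.mulVec h + (g ⬝ᵥ h)^2) ∧
    (∀ x ∈ Eset, ∀ h : Fin n → ℝ, cubicForm q x h = 0) ∧
    (∀ x ∈ Eset, ∀ h : Fin n → ℝ, h ≠ 0 → 0 < affMetric q x h) := by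
  subst hq
  subst hE
  have hpos : ∀ v : Fin n → ℝ, v ≠ 0 → 0 < v ⬝ᵥ G.mulVec v := by
    intro v hv
    have := hGpd.dotProduct_mulVec_pos hv
    simpa using this
  have hnn : ∀ v : Fin n → ℝ, 0 ≤ v ⬝ᵥ G.mulVec v := by
    intro v
    have := hGpd.posSemidef.dotProduct_mulVec_nonneg v
    simpa using this
  have hxh : Real.sqrt ((xh - xh) ⬝ᵥ G.mulVec (xh - xh)) < 1 - g ⬝ᵥ (xh - xh) := by
    simp [sub_self]
  refine ⟨?_, ?_, ?_, ?_, ?_⟩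
  · show c - 1/2 * Real.log ((1 - g ⬝ᵥ (xh - xh))^2 - (xh - xh) ⬝ᵥ G.mulVec (xh - xh)) = c
    simp [sub_self]
  · intro h
    have := (psc_derivs xh g c G hG xh hxh h 1 (g ⬝ᵥ h) 0 0 (h ⬝ᵥ G.mulVec h) 1
      (by simp [sub_self]) rfl (by simp [sub_self]) (by simp [sub_self]) rfl (by norm_num)).2.1
    rw [this]; ring
  · intro h
    have := (psc_derivs xh g c G hG xh hxh h 1 (g ⬝ᵥ h) 0 0 (h ⬝ᵥ G.mulVec h) 1
      (by simp [sub_self]) rfl (by simp [sub_self]) (by simp [sub_self]) rfl (by norm_num)).2.2.1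
    rw [this]; ring
  · intro x hxE h
    have hx : Real.sqrt ((x - xh) ⬝ᵥ G.mulVec (x - xh)) < 1 - g ⬝ᵥ (x - xh) := hxE
    obtain ⟨hApos, h1, h2, h3⟩ :=
      psc_derivs xh g c G hG x hx h _ _ _ _ _ _ rfl rfl rfl rfl rfl rfl
    have hAne := ne_of_gt hApos
    unfold cubicForm
    rw [h1, h2, h3]
    field_simp
    ring
  · intro x hxE h hh0
    have hx : Real.sqrt ((x - xh) ⬝ᵥ G.mulVec (x - xh)) < 1 - g ⬝ᵥ (x - xh) := hxE
    obtain ⟨hApos, h1, h2, _⟩ :=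
      psc_derivs xh g c G hG x hx h _ _ _ _ _ _ rfl rfl rfl rfl rfl rfl
    have key := psc_metric_pos G hG hGpd g (x - xh) h hh0 hx _ _ _ _ _
      rfl rfl rfl rfl rfl hApos
    have hAne : (1 - g ⬝ᵥ (x - xh))^2 - (x - xh) ⬝ᵥ G.mulVec (x - xh) ≠ 0 := by
      have : ((1 - g ⬝ᵥ (x - xh)))^2 - (x - xh) ⬝ᵥ G.mulVec (x - xh)
          = (1 - g ⬝ᵥ (x - xh))^2 - (x - xh) ⬝ᵥ G.mulVec (x - xh) := rfl
      exact ne_of_gt hApos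
    unfold affMetric
    rw [h1, h2]
    set r : ℝ := 1 - g ⬝ᵥ (x - xh)
    set p : ℝ := g ⬝ᵥ h
    set U : ℝ := (x - xh) ⬝ᵥ G.mulVec (x - xh)
    set W : ℝ := (x - xh) ⬝ᵥ G.mulVec h
    set H : ℝ := h ⬝ᵥ G.mulVec h
    have hAne' : r^2 - U ≠ 0 := ne_of_gt hApos
    have e : (2*(r*p + W)^2 - (p^2 - H)*(r^2 - U))/(r^2 - U)^2 - ((r*p + W)/(r^2 - U))^2
        = ((r*p + W)^2 - (p^2 - H)*(r^2 - U))/(r^2 - U)^2 := by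
      field_simp
      ring
    rw [e]
    exact div_pos key (by positivity)
end

section
/- Let n ≥ 2, let K ⊂ ℝⁿ be a regular convex cone and F : int K → ℝ a C³ logarithmically homogeneous function of degree ν (F(tx) = −ν log t + F(x)) with F''(x) ≻ 0 and |F'''(x)[h,h,h]| ≤ 2(F''(x)[h,h])^{3/2} for all x ∈ int K, h ∈ ℝⁿ. Then ν ≥ 2. -/
open Filter Topology

section Helpers

variable {E : Type*} [NormedAddCommGroup E] [NormedSpace ℝ E]

theorem fderiv_eval {F' : Type*} [NormedAddCommGroup F'] [NormedSpace ℝ F']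
    {G : E → E →L[ℝ] F'} {y : E} (hG : DifferentiableAt ℝ G y) (b : E) :
    fderiv ℝ (fun z => G z b) y = (ContinuousLinearMap.apply ℝ F' b).comp (fderiv ℝ G y) :=
  (((ContinuousLinearMap.apply ℝ F' b).hasFDerivAt).comp y hG.hasFDerivAt).fderiv

theorem diff_eval {F' : Type*} [NormedAddCommGroup F'] [NormedSpace ℝ F']
    {G : E → E →L[ℝ] F'} {y : E} (hG : DifferentiableAt ℝ G y) (b : E) :
    DifferentiableAt ℝ (fun z => G z b) y :=
  (((ContinuousLinearMap.apply ℝ F' b).hasFDerivAt).comp y hG.hasFDerivAt).differentiableAt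

theorem fderiv_eval_apply {F' : Type*} [NormedAddCommGroup F'] [NormedSpace ℝ F']
    {G : E → E →L[ℝ] F'} {y : E} (hG : DifferentiableAt ℝ G y) (b a : E) :
    fderiv ℝ (fun z => G z b) y a = fderiv ℝ G y a b := by
  rw [fderiv_eval hG b]; rfl

theorem fderiv_eval2 {G : E → E →L[ℝ] E →L[ℝ] ℝ} {y : E}
    (hG : DifferentiableAt ℝ G y) (b c a : E) :
    fderiv ℝ (fun z => G z b c) y a = fderiv ℝ G y a b c := by
  have h1 : fderiv ℝ (fun z => G z b) y
      = (ContinuousLinearMap.apply ℝ (E →L[ℝ] ℝ) b).comp (fderiv ℝ G y) := fderiv_eval hG b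
  have h2 : fderiv ℝ (fun z => (fun w => G w b) z c) y =
      (ContinuousLinearMap.apply ℝ ℝ c).comp (fderiv ℝ (fun w => G w b) y) :=
    fderiv_eval (diff_eval hG b) c
  simp only [h1] at h2
  simpa using congrFun (congrArg DFunLike.coe h2) a

theorem diff_eval2 {G : E → E →L[ℝ] E →L[ℝ] ℝ} {y : E}
    (hG : DifferentiableAt ℝ G y) (b c : E) :
    DifferentiableAt ℝ (fun z => G z b c) y :=
  diff_eval (G := fun z => G z b) (diff_eval hG b) c

theorem fderiv_evalM {k : ℕ} {G : E → ContinuousMultilinearMap ℝ (fun _ : Fin k => E) ℝ} {y : E}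
    (hG : DifferentiableAt ℝ G y) (m : Fin k → E) (a : E) :
    fderiv ℝ (fun z => G z m) y a = fderiv ℝ G y a m := by
  have h : fderiv ℝ (fun z => G z m) y
      = (ContinuousMultilinearMap.apply ℝ (fun _ : Fin k => E) ℝ m).comp (fderiv ℝ G y) :=
    (((ContinuousMultilinearMap.apply ℝ (fun _ : Fin k => E) ℝ m).hasFDerivAt).comp y
      hG.hasFDerivAt).fderiv
  simpa using congrFun (congrArg DFunLike.coe h) a

theorem iteratedFDeriv_three {f : E → ℝ} {x : E} (hf : ContDiffAt ℝ 3 f x) (m : Fin 3 → E) :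
    iteratedFDeriv ℝ 3 f x m = fderiv ℝ (fderiv ℝ (fderiv ℝ f)) x (m 0) (m 1) (m 2) := by
  have hG2 : DifferentiableAt ℝ (iteratedFDeriv ℝ 2 f) x :=
    (hf.iteratedFDeriv_right (m := 1) (i := 2) (by norm_num)).differentiableAt one_ne_zero
  have hH : DifferentiableAt ℝ (fderiv ℝ (fderiv ℝ f)) x := by
    have h2 : ContDiffAt ℝ 2 (fderiv ℝ f) x := hf.fderiv_right (by norm_num)
    exact (h2.fderiv_right (m := 1) (by norm_num)).differentiableAt one_ne_zero
  rw [iteratedFDeriv_succ_apply_left]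
  have e1 : fderiv ℝ (iteratedFDeriv ℝ 2 f) x (m 0) (Fin.tail m)
      = fderiv ℝ (fun z => iteratedFDeriv ℝ 2 f z (Fin.tail m)) x (m 0) :=
    (fderiv_evalM hG2 (Fin.tail m) (m 0)).symm
  rw [e1]
  have e2 : (fun z => iteratedFDeriv ℝ 2 f z (Fin.tail m))
      = fun z => fderiv ℝ (fderiv ℝ f) z (m 1) (m 2) := by
    funext z
    rw [iteratedFDeriv_two_apply]
    rfl
  rw [e2, fderiv_eval2 hH]

theorem hasDerivAt_ray {f : E → ℝ} {x0 : E} (hf : DifferentiableAt ℝ f x0) :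
    HasDerivAt (fun t : ℝ => f (t • x0)) (fderiv ℝ f x0 x0) 1 := by
  have h1 : HasDerivAt (fun t : ℝ => t • x0) x0 1 := by
    simpa using (hasDerivAt_id (1 : ℝ)).smul_const x0
  have h0 : HasFDerivAt f (fderiv ℝ f x0) ((1 : ℝ) • x0) := by
    rw [one_smul]; exact hf.hasFDerivAt
  exact h0.comp_hasDerivAt 1 h1

end Helpers

theorem final_arith (P m a ν : ℝ) (hP : 0 < P) (hν : 0 < ν) (ha : a ^ 2 * ν = P)
    (k1 : (m - 8 * P * a) ^ 2 ≤ 4 * (2 * P) ^ 3)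
    (k2 : (m + 8 * P * a) ^ 2 ≤ 4 * (2 * P) ^ 3) : 2 ≤ ν := by
  have hsum : 2 * m ^ 2 + 128 * P ^ 2 * a ^ 2 ≤ 64 * P ^ 3 := by nlinarith [k1, k2]
  have hmul := mul_le_mul_of_nonneg_right hsum hν.le
  have hPa : P ^ 2 * (a ^ 2 * ν) = P ^ 3 := by rw [ha]; ring
  have hmn : 0 ≤ m ^ 2 * ν := mul_nonneg (sq_nonneg _) hν.le
  have h128 : 128 * P ^ 3 ≤ 64 * P ^ 3 * ν := by nlinarith [hmul, hPa, hmn]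
  nlinarith [h128, mul_pos (mul_pos hP hP) hP]

set_option maxHeartbeats 1000000 in
theorem stmt_19 {n : ℕ} (hn : 2 ≤ n) (K : Set (EuclideanSpace ℝ (Fin n)))
    (hKclosed : IsClosed K) (hKconv : Convex ℝ K)
    (hKint : (interior K).Nonempty)
    (hKcone : ∀ x ∈ K, ∀ t : ℝ, 0 < t → t • x ∈ K)
    (hKpointed : ∀ x ∈ K, -x ∈ K → x = 0)
    (F : EuclideanSpace ℝ (Fin n) → ℝ) (ν : ℝ)
    (hF : ContDiffOn ℝ 3 F (interior K))
    (hhom : ∀ x ∈ interior K, ∀ t : ℝ, 0 < t → F (t • x) = -ν * Real.log t + F x)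
    (hpos : ∀ x ∈ interior K, ∀ h : EuclideanSpace ℝ (Fin n), h ≠ 0 →
      0 < iteratedFDeriv ℝ 2 F x (fun _ => h))
    (hsc : ∀ x ∈ interior K, ∀ h : EuclideanSpace ℝ (Fin n),
      |iteratedFDeriv ℝ 3 F x (fun _ => h)| ≤ 2 * (iteratedFDeriv ℝ 2 F x (fun _ => h)) ^ ((3:ℝ)/2)) :
    2 ≤ ν := by
  classical
  obtain ⟨x0, hx0⟩ := hKint
  have hUopen : IsOpen (interior K) := isOpen_interior
  -- the interior is invariant under positive scaling
  have hscale : ∀ t : ℝ, 0 < t → ∀ y ∈ interior K, t • y ∈ interior K := by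
    intro t ht y hy
    rcases mem_interior.1 hy with ⟨V, hVK, hVo, hyV⟩
    refine mem_interior.2 ⟨(fun z => t⁻¹ • z) ⁻¹' V, ?_, hVo.preimage (continuous_const_smul _), ?_⟩
    · intro z hz
      have hz' : t⁻¹ • z ∈ K := hVK hz
      have := hKcone _ hz' t ht
      rwa [smul_smul, mul_inv_cancel₀ ht.ne', one_smul] at this
    · show t⁻¹ • t • y ∈ V
      rwa [smul_smul, inv_mul_cancel₀ ht.ne', one_smul]
  -- the base point is nonzero
  have hx0ne : x0 ≠ 0 := by
    intro h0
    have h0' : (0 : EuclideanSpace ℝ (Fin n)) ∈ interior K := h0 ▸ hx0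
    obtain ⟨ε, hε, hball⟩ := Metric.mem_nhds_iff.1 (mem_interior_iff_mem_nhds.1 h0')
    set e : EuclideanSpace ℝ (Fin n) := EuclideanSpace.single (⟨0, by omega⟩ : Fin n) (ε/2) with he
    have hne : ‖e‖ = ε/2 := by
      rw [he, EuclideanSpace.norm_single]
      rw [Real.norm_eq_abs, abs_of_pos (by linarith)]
    have heK : e ∈ K := hball (by
      simp only [Metric.mem_ball, dist_zero_right, hne]; linarith)
    have heK' : -e ∈ K := hball (by
      simp only [Metric.mem_ball, dist_zero_right, norm_neg, hne]; linarith)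
    have he0 := hKpointed e heK heK'
    rw [he0] at hne
    simp at hne
    linarith
  -- smoothness facts
  have hF3 : ∀ y ∈ interior K, ContDiffAt ℝ 3 F y :=
    fun y hy => hF.contDiffAt (hUopen.mem_nhds hy)
  have hdF : ∀ y ∈ interior K, DifferentiableAt ℝ F y :=
    fun y hy => (hF3 y hy).differentiableAt (by norm_num)
  have hdF1 : ∀ y ∈ interior K, DifferentiableAt ℝ (fderiv ℝ F) y :=
    fun y hy => ((hF3 y hy).fderiv_right (m := 2) (by norm_num)).differentiableAt (by norm_num)
  have hdH : ∀ y ∈ interior K, DifferentiableAt ℝ (fderiv ℝ (fderiv ℝ F)) y :=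
    fun y hy => (((hF3 y hy).fderiv_right (m := 2) (by norm_num)).fderiv_right (m := 1)
      (by norm_num)).differentiableAt one_ne_zero
  -- first order homogeneity of the derivative
  have stepB : ∀ t : ℝ, 0 < t → ∀ y ∈ interior K, ∀ k : EuclideanSpace ℝ (Fin n),
      t * fderiv ℝ F (t • y) k = fderiv ℝ F y k := by
    intro t ht y hy k
    have hty : t • y ∈ interior K := hscale t ht y hy
    have hsm : HasFDerivAt (fun z : EuclideanSpace ℝ (Fin n) => t • z)
        (t • ContinuousLinearMap.id ℝ (EuclideanSpace ℝ (Fin n))) y :=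
      (hasFDerivAt_id y).const_smul t
    have hcomp : HasFDerivAt (fun z => F (t • z))
        ((fderiv ℝ F (t • y)).comp (t • ContinuousLinearMap.id ℝ (EuclideanSpace ℝ (Fin n)))) y :=
      (hdF _ hty).hasFDerivAt.comp y hsm
    have heq : (fun z => F (t • z)) =ᶠ[𝓝 y] fun z => -ν * Real.log t + F z := by
      filter_upwards [hUopen.mem_nhds hy] with z hz
      exact hhom z hz t ht
    have hcomp' : HasFDerivAt (fun z => -ν * Real.log t + F z)
        ((fderiv ℝ F (t • y)).comp (t • ContinuousLinearMap.id ℝ (EuclideanSpace ℝ (Fin n)))) y :=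
      hcomp.congr_of_eventuallyEq heq.symm
    have h2 : HasFDerivAt (fun z => -ν * Real.log t + F z) (fderiv ℝ F y) y :=
      (hdF y hy).hasFDerivAt.const_add _
    have huniq := hcomp'.unique h2
    calc t * fderiv ℝ F (t • y) k
        = ((fderiv ℝ F (t • y)).comp
            (t • ContinuousLinearMap.id ℝ (EuclideanSpace ℝ (Fin n)))) k := by
          simp [map_smul, smul_eq_mul]
      _ = fderiv ℝ F y k := by rw [huniq]
  -- second order homogeneity
  have stepC : ∀ t : ℝ, 0 < t → ∀ y ∈ interior K, ∀ k l : EuclideanSpace ℝ (Fin n),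
      t * (t * fderiv ℝ (fderiv ℝ F) (t • y) k l) = fderiv ℝ (fderiv ℝ F) y k l := by
    intro t ht y hy k l
    have hty : t • y ∈ interior K := hscale t ht y hy
    have hsm : HasFDerivAt (fun z : EuclideanSpace ℝ (Fin n) => t • z)
        (t • ContinuousLinearMap.id ℝ (EuclideanSpace ℝ (Fin n))) y :=
      (hasFDerivAt_id y).const_smul t
    have hVd : ∀ z ∈ interior K, DifferentiableAt ℝ (fun w => fderiv ℝ F w l) z :=
      fun z hz => diff_eval (hdF1 z hz) l
    have hcomp : HasFDerivAt (fun z => fderiv ℝ F (t • z) l)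
        ((fderiv ℝ (fun w => fderiv ℝ F w l) (t • y)).comp
          (t • ContinuousLinearMap.id ℝ (EuclideanSpace ℝ (Fin n)))) y :=
      (hVd _ hty).hasFDerivAt.comp y hsm
    have heq : (fun z => fderiv ℝ F (t • z) l) =ᶠ[𝓝 y] fun z => t⁻¹ * fderiv ℝ F z l := by
      filter_upwards [hUopen.mem_nhds hy] with z hz
      have := stepB t ht z hz l
      field_simp
      linarith [this]
    have hcomp' : HasFDerivAt (fun z => t⁻¹ * fderiv ℝ F z l)
        ((fderiv ℝ (fun w => fderiv ℝ F w l) (t • y)).comp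
          (t • ContinuousLinearMap.id ℝ (EuclideanSpace ℝ (Fin n)))) y :=
      hcomp.congr_of_eventuallyEq heq.symm
    have h2 : HasFDerivAt (fun z => t⁻¹ * fderiv ℝ F z l)
        (t⁻¹ • fderiv ℝ (fun w => fderiv ℝ F w l) y) y :=
      (hVd y hy).hasFDerivAt.const_mul t⁻¹
    have huniq := hcomp'.unique h2
    have happ := congrFun (congrArg DFunLike.coe huniq) k
    simp only [ContinuousLinearMap.comp_apply, ContinuousLinearMap.smul_apply,
      ContinuousLinearMap.id_apply, map_smul, smul_eq_mul] at happ
    rw [fderiv_eval_apply (hdF1 _ hty) l k, fderiv_eval_apply (hdF1 y hy) l k] at happ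
    -- happ : t * (fderiv (fderiv F) (t•y) k l) = t⁻¹ * (fderiv (fderiv F) y k l)
    have ht0 : t ≠ 0 := ht.ne'
    field_simp at happ
    nlinarith [happ]
  -- I0 : F'(x0)[x0] = -nu
  have I0 : fderiv ℝ F x0 x0 = -ν := by
    have hg : HasDerivAt (fun t : ℝ => F (t • x0)) (fderiv ℝ F x0 x0) 1 :=
      hasDerivAt_ray (hdF x0 hx0)
    have heq : (fun t : ℝ => F (t • x0)) =ᶠ[𝓝 (1:ℝ)] fun t => -ν * Real.log t + F x0 := by
      filter_upwards [isOpen_Ioi.mem_nhds (show (1:ℝ) ∈ Set.Ioi 0 by norm_num)] with t ht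
      exact hhom x0 hx0 t ht
    have hg' : HasDerivAt (fun t : ℝ => -ν * Real.log t + F x0) (fderiv ℝ F x0 x0) 1 :=
      hg.congr_of_eventuallyEq heq.symm
    have hg2 : HasDerivAt (fun t : ℝ => -ν * Real.log t + F x0) (-ν) 1 := by
      simpa using ((Real.hasDerivAt_log one_ne_zero).const_mul (-ν)).add_const (F x0)
    exact hg'.unique hg2
  -- I1 : F''(x0)[x0, h] = -F'(x0)[h]
  have I1 : ∀ h : EuclideanSpace ℝ (Fin n),
      fderiv ℝ (fderiv ℝ F) x0 x0 h = -fderiv ℝ F x0 h := by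
    intro h
    have hVd : DifferentiableAt ℝ (fun z => fderiv ℝ F z h) x0 := diff_eval (hdF1 x0 hx0) h
    have hg : HasDerivAt (fun t : ℝ => fderiv ℝ F (t • x0) h)
        (fderiv ℝ (fun z => fderiv ℝ F z h) x0 x0) 1 := hasDerivAt_ray hVd
    have heq : (fun t : ℝ => fderiv ℝ F (t • x0) h)
        =ᶠ[𝓝 (1:ℝ)] fun t => t⁻¹ * fderiv ℝ F x0 h := by
      filter_upwards [isOpen_Ioi.mem_nhds (show (1:ℝ) ∈ Set.Ioi 0 by norm_num)] with t ht
      have := stepB t ht x0 hx0 h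
      have ht0 : (t:ℝ) ≠ 0 := ne_of_gt ht
      field_simp
      linarith [this]
    have hg' : HasDerivAt (fun t : ℝ => t⁻¹ * fderiv ℝ F x0 h)
        (fderiv ℝ (fun z => fderiv ℝ F z h) x0 x0) 1 := hg.congr_of_eventuallyEq heq.symm
    have hg2 : HasDerivAt (fun t : ℝ => t⁻¹ * fderiv ℝ F x0 h) (-fderiv ℝ F x0 h) 1 := by
      simpa using (hasDerivAt_inv one_ne_zero).mul_const (fderiv ℝ F x0 h)
    have := hg'.unique hg2
    rw [fderiv_eval_apply (hdF1 x0 hx0) h x0] at this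
    exact this
  -- I2 : F'''(x0)[x0, h, h] = -2 F''(x0)[h, h]
  have I2 : ∀ h : EuclideanSpace ℝ (Fin n),
      fderiv ℝ (fderiv ℝ (fderiv ℝ F)) x0 x0 h h
        = -2 * fderiv ℝ (fderiv ℝ F) x0 h h := by
    intro h
    have hWd : DifferentiableAt ℝ (fun z => fderiv ℝ (fderiv ℝ F) z h h) x0 :=
      diff_eval2 (hdH x0 hx0) h h
    have hg : HasDerivAt (fun t : ℝ => fderiv ℝ (fderiv ℝ F) (t • x0) h h)
        (fderiv ℝ (fun z => fderiv ℝ (fderiv ℝ F) z h h) x0 x0) 1 := hasDerivAt_ray hWd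
    have heq : (fun t : ℝ => fderiv ℝ (fderiv ℝ F) (t • x0) h h)
        =ᶠ[𝓝 (1:ℝ)] fun t => t⁻¹ * (t⁻¹ * fderiv ℝ (fderiv ℝ F) x0 h h) := by
      filter_upwards [isOpen_Ioi.mem_nhds (show (1:ℝ) ∈ Set.Ioi 0 by norm_num)] with t ht
      have hst := stepC t ht x0 hx0 h h
      have ht0 : (t:ℝ) ≠ 0 := ne_of_gt ht
      set A := fderiv ℝ (fderiv ℝ F) (t • x0) h h with hA
      set C := fderiv ℝ (fderiv ℝ F) x0 h h with hC
      -- hst : t * (t * A) = C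
      field_simp
      linarith [hst]
    have hg' : HasDerivAt (fun t : ℝ => t⁻¹ * (t⁻¹ * fderiv ℝ (fderiv ℝ F) x0 h h))
        (fderiv ℝ (fun z => fderiv ℝ (fderiv ℝ F) z h h) x0 x0) 1 :=
      hg.congr_of_eventuallyEq heq.symm
    have hg2 : HasDerivAt (fun t : ℝ => t⁻¹ * (t⁻¹ * fderiv ℝ (fderiv ℝ F) x0 h h))
        (-2 * fderiv ℝ (fderiv ℝ F) x0 h h) 1 := by
      have h1 : HasDerivAt (fun t : ℝ => t⁻¹) (-1) 1 := by
        simpa using hasDerivAt_inv (one_ne_zero (α := ℝ))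
      have h2 : HasDerivAt (fun t : ℝ => t⁻¹ * fderiv ℝ (fderiv ℝ F) x0 h h)
          (-fderiv ℝ (fderiv ℝ F) x0 h h) 1 := by
        simpa using h1.mul_const (fderiv ℝ (fderiv ℝ F) x0 h h)
      have := h1.mul h2
      norm_num at this
      exact this.congr_deriv (by ring)
    have := hg'.unique hg2
    rw [fderiv_eval2 (hdH x0 hx0) h h x0] at this
    exact this
  -- symmetry of the third derivative in the first two slots
  have S12 : ∀ a b c : EuclideanSpace ℝ (Fin n),
      fderiv ℝ (fderiv ℝ (fderiv ℝ F)) x0 a b c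
        = fderiv ℝ (fderiv ℝ (fderiv ℝ F)) x0 b a c := by
    intro a b c
    have hfe : ∀ᶠ y in 𝓝 x0, HasFDerivAt (fderiv ℝ F) (fderiv ℝ (fderiv ℝ F) y) y := by
      filter_upwards [hUopen.mem_nhds hx0] with y hy
      exact (hdF1 y hy).hasFDerivAt
    have hsym := second_derivative_symmetric_of_eventually hfe (hdH x0 hx0).hasFDerivAt a b
    exact congrFun (congrArg DFunLike.coe hsym) c
  -- symmetry of the third derivative in the last two slots
  have S23 : ∀ a b c : EuclideanSpace ℝ (Fin n),
      fderiv ℝ (fderiv ℝ (fderiv ℝ F)) x0 a b c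
        = fderiv ℝ (fderiv ℝ (fderiv ℝ F)) x0 a c b := by
    intro a b c
    have h1 := fderiv_eval2 (hdH x0 hx0) b c a
    have h2 := fderiv_eval2 (hdH x0 hx0) c b a
    have heq : (fun z => fderiv ℝ (fderiv ℝ F) z b c)
        =ᶠ[𝓝 x0] fun z => fderiv ℝ (fderiv ℝ F) z c b := by
      filter_upwards [hUopen.mem_nhds hx0] with y hy
      exact ((hF3 y hy).isSymmSndFDerivAt (by norm_num)) b c
    rw [← h1, ← h2, heq.fderiv_eq]
  set B2 := fderiv ℝ (fderiv ℝ F) x0 with hB2def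
  set T3 := fderiv ℝ (fderiv ℝ (fderiv ℝ F)) x0 with hT3def
  -- value of the quadratic form on x0
  have hν : B2 x0 x0 = ν := by rw [I1 x0, I0]; ring
  have hBpos : ∀ h : EuclideanSpace ℝ (Fin n), h ≠ 0 → 0 < B2 h h := by
    intro h hh
    have := hpos x0 hx0 h hh
    rw [iteratedFDeriv_two_apply] at this
    exact this
  have hνpos : 0 < ν := hν ▸ hBpos x0 hx0ne
  -- choose a direction w with symmetrized B2-orthogonality to x0
  have hexv : ∃ w : EuclideanSpace ℝ (Fin n), w ≠ 0 ∧ B2 x0 w + B2 w x0 = 0 := by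
    by_contra hcon
    push_neg at hcon
    set L : EuclideanSpace ℝ (Fin n) →L[ℝ] ℝ := B2 x0 + B2.flip x0 with hLdef
    have hL : ∀ w, L w = B2 x0 w + B2 w x0 := by
      intro w
      simp [hLdef, ContinuousLinearMap.add_apply, ContinuousLinearMap.flip_apply]
    have hker : ∀ w, (L : EuclideanSpace ℝ (Fin n) →ₗ[ℝ] ℝ) w = 0 → w = 0 := by
      intro w hw
      by_contra hwne
      exact hcon w hwne (by rw [← hL w]; exact hw)
    have hinj : Function.Injective (L : EuclideanSpace ℝ (Fin n) →ₗ[ℝ] ℝ) := by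
      rw [← LinearMap.ker_eq_bot]
      exact (Submodule.eq_bot_iff _).2 fun w hw => hker w hw
    have hle := LinearMap.finrank_le_finrank_of_injective hinj
    rw [finrank_euclideanSpace_fin, Module.finrank_self] at hle
    omega
  obtain ⟨w, hw0, hworth⟩ := hexv
  have hβpos : 0 < B2 w w := hBpos w hw0
  -- third derivative identities
  have e1 : T3 x0 w w = -2 * B2 w w := I2 w
  have e7 : T3 x0 x0 x0 = -2 * ν := by rw [I2 x0, hν]
  have e4 : T3 x0 x0 w = 0 := by
    have hx := I2 (x0 + w)
    simp only [map_add, ContinuousLinearMap.add_apply] at hx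
    have hswap : T3 x0 w x0 = T3 x0 x0 w := S23 x0 w x0
    have e1' := I2 x0
    have e2' := I2 w
    linarith [hx, hswap, e1', e2', hworth, hν]
  have e5 : T3 x0 w x0 = 0 := by rw [S23 x0 w x0]; exact e4
  have e2 : T3 w x0 w = -2 * B2 w w := by rw [S12 w x0 w]; exact e1
  have e3 : T3 w w x0 = -2 * B2 w w := by rw [S23 w w x0]; exact e2
  have e6 : T3 w x0 x0 = 0 := by rw [S12 w x0 x0]; exact e5
  -- the self-concordance inequality along w + s • x0
  have key : ∀ s : ℝ, (T3 w w w - 6 * B2 w w * s - 2 * ν * s ^ 3) ^ 2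
      ≤ 4 * (B2 w w + s ^ 2 * ν) ^ 3 := by
    intro s
    have h1 := hsc x0 hx0 (w + s • x0)
    have hBe : iteratedFDeriv ℝ 2 F x0 (fun _ => w + s • x0) = B2 w w + s ^ 2 * ν := by
      rw [iteratedFDeriv_two_apply, ← hB2def]
      simp only [map_add, map_smul, ContinuousLinearMap.add_apply,
        ContinuousLinearMap.smul_apply, smul_eq_mul]
      linear_combination s * hworth + s ^ 2 * hν
    have hTe : iteratedFDeriv ℝ 3 F x0 (fun _ => w + s • x0)
        = T3 w w w - 6 * B2 w w * s - 2 * ν * s ^ 3 := by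
      rw [iteratedFDeriv_three (hF3 x0 hx0), ← hT3def]
      simp only [map_add, map_smul, ContinuousLinearMap.add_apply,
        ContinuousLinearMap.smul_apply, smul_eq_mul]
      linear_combination s * e1 + s * e2 + s * e3 + s ^ 2 * e4 + s ^ 2 * e5 + s ^ 2 * e6
        + s ^ 3 * e7
    rw [hBe, hTe] at h1
    have hb : (0:ℝ) ≤ B2 w w + s ^ 2 * ν := by nlinarith [hβpos, hνpos, sq_nonneg s]
    have habs := abs_nonneg (T3 w w w - 6 * B2 w w * s - 2 * ν * s ^ 3)
    have hsq : (T3 w w w - 6 * B2 w w * s - 2 * ν * s ^ 3) ^ 2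
        ≤ (2 * (B2 w w + s ^ 2 * ν) ^ ((3:ℝ)/2)) ^ 2 := by
      rw [← sq_abs]
      exact pow_le_pow_left₀ habs h1 2
    have hr : ((B2 w w + s ^ 2 * ν) ^ ((3:ℝ)/2)) ^ 2 = (B2 w w + s ^ 2 * ν) ^ 3 := by
      rw [← Real.rpow_natCast ((B2 w w + s ^ 2 * ν) ^ ((3:ℝ)/2)) 2, ← Real.rpow_mul hb]
      norm_num
    calc (T3 w w w - 6 * B2 w w * s - 2 * ν * s ^ 3) ^ 2
        ≤ (2 * (B2 w w + s ^ 2 * ν) ^ ((3:ℝ)/2)) ^ 2 := hsq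
      _ = 4 * ((B2 w w + s ^ 2 * ν) ^ ((3:ℝ)/2)) ^ 2 := by ring
      _ = 4 * (B2 w w + s ^ 2 * ν) ^ 3 := by rw [hr]
  -- evaluate at s = ±sqrt(B2 w w / ν)
  clear_value B2 T3
  have hαd : (0:ℝ) ≤ B2 w w / ν := div_nonneg hβpos.le hνpos.le
  obtain ⟨α, hα2'⟩ : ∃ α : ℝ, α ^ 2 * ν = B2 w w :=
    ⟨Real.sqrt (B2 w w / ν), by rw [Real.sq_sqrt hαd, div_mul_cancel₀ _ hνpos.ne']⟩
  have k1 := key α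
  have k2 := key (-α)
  have hq1 : T3 w w w - 6 * B2 w w * α - 2 * ν * α ^ 3 = T3 w w w - 8 * B2 w w * α := by
    linear_combination (-2 * α) * hα2'
  have hb1 : B2 w w + α ^ 2 * ν = 2 * B2 w w := by linarith [hα2']
  have hq2 : T3 w w w - 6 * B2 w w * (-α) - 2 * ν * (-α) ^ 3
      = T3 w w w + 8 * B2 w w * α := by
    linear_combination (2 * α) * hα2'
  have hb2 : B2 w w + (-α) ^ 2 * ν = 2 * B2 w w := by linear_combination hα2'
  rw [hq1, hb1] at k1
  rw [hq2, hb2] at k2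
  exact final_arith (B2 w w) (T3 w w w) α ν hβpos hνpos hα2' k1 k2
end
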